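/- arXiv:1902.02608 — 8 statements merged into one kernel-verified Lean document; each statement's English description precedes it below -/
import Mathlib

section
/- The determinant of the eccentricity matrix of the star K_{1,n-1} on n vertices equals (−1)^{n−1}(n−1)2^{n−2}. -/
open Matrix

/-- The determinant of the eccentricity matrix of the star `K_{1,n-1}` on `n` vertices,
which is `[[0, J_{1×(n-1)}],[J_{(n-1)×1}, 2(J_{n-1} - I_{n-1})]]`,
equals `(-1)^(n-1) (n-1) 2^(n-2)`. -/
theorem det_eccMatrix_star (n : ℕ) (hn : 2 ≤ n)
    (M : Matrix (Fin n) (Fin n) ℝ)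
    (hM : M = Matrix.of fun (i j : Fin n) =>
      if (i : ℕ) = 0 ∧ (j : ℕ) = 0 then 0 else if (i : ℕ) = 0 ∨ (j : ℕ) = 0 then 1
      else if i = j then 0 else 2) :
    M.det = (-1) ^ (n - 1) * ((n : ℝ) - 1) * 2 ^ (n - 2) := by
  subst hM
  rcases Nat.lt_or_ge n 3 with h3 | h3
  · have hn2 : n = 2 := by omega
    subst hn2
    have : (Matrix.of fun (i j : Fin 2) =>
        if (i : ℕ) = 0 ∧ (j : ℕ) = 0 then (0:ℝ) else if (i : ℕ) = 0 ∨ (j : ℕ) = 0 then 1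
        else if i = j then 0 else 2) = !![0,1;1,0] := by
      ext i j
      fin_cases i <;> fin_cases j <;> norm_num
    rw [this]
    norm_num [Matrix.det_fin_two_of]
  · obtain ⟨m, rfl⟩ : ∃ m, n = m + 3 := ⟨n - 3, by omega⟩
    set k := m + 2 with hk
    set J : Matrix (Fin k) (Fin k) ℝ := Matrix.of fun _ _ => 1 with hJ
    have hJJ : J * J = ((m : ℝ) + 2) • J := by
      ext i j
      simp [hJ, Matrix.mul_apply, Finset.sum_const, hk]
    set D : Matrix (Fin k) (Fin k) ℝ := (2:ℝ) • J - (2:ℝ) • 1 with hD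
    set P : Matrix (Fin k) (Fin k) ℝ := J - ((m:ℝ)+1) • 1 with hP
    have hDP : D * P = (2*((m:ℝ)+1)) • 1 := by
      simp only [hD, hP, Matrix.sub_mul, Matrix.mul_sub, Matrix.smul_mul, Matrix.mul_smul,
        Matrix.mul_one, Matrix.one_mul, hJJ, smul_smul]
      module
    have hPD : P * D = (2*((m:ℝ)+1)) • 1 := by
      simp only [hD, hP, Matrix.sub_mul, Matrix.mul_sub, Matrix.smul_mul, Matrix.mul_smul,
        Matrix.mul_one, Matrix.one_mul, hJJ, smul_smul]
      module
    have hm1 : ((m:ℝ)+1) ≠ 0 := by positivity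
    have hc : (2*((m:ℝ)+1)) ≠ 0 := by positivity
    set c : ℝ := (2*((m:ℝ)+1))⁻¹ with hcdef
    set Dinv : Matrix (Fin k) (Fin k) ℝ := c • P with hDinv
    haveI hInv : Invertible D := ⟨Dinv, by
        rw [hDinv, Matrix.smul_mul, hPD, smul_smul, hcdef, inv_mul_cancel₀ hc, one_smul],
      by rw [hDinv, Matrix.mul_smul, hDP, smul_smul, hcdef, mul_comm, mul_inv_cancel₀ hc, one_smul]⟩
    have hDDinv : D * Dinv = 1 := by
      rw [hDinv, Matrix.mul_smul, hDP, smul_smul, hcdef, mul_comm, mul_inv_cancel₀ hc, one_smul]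
    have hInvOf : ⅟D = Dinv := invOf_eq_right_inv hDDinv
    set B : Matrix (Fin 1) (Fin k) ℝ := Matrix.of fun _ _ => 1 with hB
    set C : Matrix (Fin k) (Fin 1) ℝ := Matrix.of fun _ _ => 1 with hC
    -- reindex M as a block matrix
    set e : Fin 1 ⊕ Fin k ≃ Fin (m+3) := finSumFinEquiv.trans (finCongr (by omega)) with he
    rw [← Matrix.det_submatrix_equiv_self e]
    have hblock : (Matrix.of fun (i j : Fin (m+3)) =>
        if (i : ℕ) = 0 ∧ (j : ℕ) = 0 then (0:ℝ) else if (i : ℕ) = 0 ∨ (j : ℕ) = 0 then 1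
        else if i = j then 0 else 2).submatrix e e
        = Matrix.fromBlocks 0 B C D := by
      ext i j
      rcases i with i | i <;> rcases j with j | j <;>
        simp only [he, hD, hJ, hB, hC, Matrix.submatrix_apply, Equiv.trans_apply,
          finSumFinEquiv_apply_left, finSumFinEquiv_apply_right, finCongr_apply, Matrix.of_apply,
          Matrix.fromBlocks_apply₁₁, Matrix.fromBlocks_apply₁₂, Matrix.fromBlocks_apply₂₁,
          Matrix.fromBlocks_apply₂₂, Fin.coe_cast, Fin.coe_castAdd, Fin.coe_natAdd, Matrix.sub_apply,
          Matrix.smul_apply, Matrix.one_apply, Fin.ext_iff, Matrix.zero_apply] <;>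
        split_ifs <;> simp_all <;> omega
    rw [hblock, Matrix.det_fromBlocks₂₂, hInvOf]
    -- compute det D
    have hDval : D.det = (-2)^k * (-(m:ℝ)-1) := by
      have h1 : D = (-2 : ℝ) • (1 + Matrix.replicateCol (Fin 1) (fun _ => (-1:ℝ)) * Matrix.replicateRow (Fin 1) (fun _ => (1:ℝ))) := by
        ext i j
        simp [hD, hJ, Matrix.mul_apply, Matrix.one_apply, Matrix.smul_apply]
        split_ifs <;> ring
      erw [h1, Matrix.det_smul, Matrix.det_one_add_replicateCol_mul_replicateRow]
      simp [dotProduct, Finset.sum_const, hk]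
      push_cast
      ring
    -- compute Schur complement
    have hSchur : ((0 : Matrix (Fin 1) (Fin 1) ℝ) - B * Dinv * C).det = -(c * ((m:ℝ)+2)) := by
      rw [Matrix.det_fin_one]
      simp [Matrix.mul_apply, hDinv, hP, hJ, hB, hC, Matrix.smul_apply, Matrix.one_apply,
        Finset.sum_sub_distrib, Finset.sum_const, mul_sub, Finset.mul_sum, hk]
      ring
    rw [hDval, hSchur]
    have hpow : ((-2:ℝ))^k = (-1)^(m+2) * 2^(m+2) := by
      rw [hk, neg_pow]
    have h1 : m + 3 - 1 = m + 2 := rfl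
    have h2 : m + 3 - 2 = m + 1 := rfl
    rw [hpow, h1, h2, hcdef]
    push_cast
    field_simp
    ring
end

section
/- The characteristic polynomial of the eccentricity matrix of the star K_{1,n-1} on n vertices equals (λ² − (2n−4)λ − (n−1))(λ+2)^{n−2} (up to sign); equivalently its spectrum is {(n−2) ± √(n²−3n+3) each with multiplicity 1, and −2 with multiplicity n−2}. -/
open Polynomial Matrix

private def Ustar (n : ℕ) : Matrix (Fin n) (Fin 2) ℝ :=
  Matrix.of fun i k => if (i : ℕ) = 0 then (if k = 0 then 0 else 1) else (if k = 0 then 1 else 0)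

private def Vstar (n : ℕ) : Matrix (Fin 2) (Fin n) ℝ :=
  Matrix.of fun k j => if (j : ℕ) = 0 then (if k = 0 then 1 else 2) else (if k = 0 then 2 else 1)

private lemma sum_if_zero (n : ℕ) (hn : 0 < n) (a b : ℝ) :
    ∑ j : Fin n, (if (j : ℕ) = 0 then a else b) = a + ((n : ℝ) - 1) * b := by
  haveI : NeZero n := ⟨by omega⟩
  have h1 : ∀ j : Fin n, (if (j : ℕ) = 0 then a else b)
      = (if j = 0 then a - b else 0) + b := by
    intro j
    by_cases h : (j : ℕ) = 0
    · have hj : j = 0 := Fin.ext (by simpa using h)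
      simp [h, hj]
    · have hj : j ≠ 0 := fun hj => h (by simp [hj])
      simp [h, hj]
  rw [Finset.sum_congr rfl fun j _ => h1 j, Finset.sum_add_distrib,
    Finset.sum_ite_eq' Finset.univ (0 : Fin n)]
  simp [Finset.card_univ]
  ring

private lemma sum_if_mul (n : ℕ) (hn : 0 < n) (a b c d : ℝ) :
    ∑ j : Fin n, (if (j : ℕ) = 0 then a else b) * (if (j : ℕ) = 0 then c else d)
      = a * c + ((n : ℝ) - 1) * (b * d) := by
  rw [← sum_if_zero n hn (a * c) (b * d)]
  refine Finset.sum_congr rfl fun j _ => ?_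
  by_cases h : (j : ℕ) = 0 <;> simp [h]

/-- The characteristic polynomial of the eccentricity matrix of the star `K_{1,n-1}`
on `n ≥ 3` vertices equals `(λ² - (2n-4)λ - (n-1)) (λ+2)^(n-2)`; equivalently,
its spectrum is `(n-2) ± √(n²-3n+3)` with multiplicity 1 and `-2` with multiplicity `n-2`. -/
theorem charpoly_eccMatrix_star (n : ℕ) (hn : 3 ≤ n)
    (M : Matrix (Fin n) (Fin n) ℝ)
    (hM : M = Matrix.of fun (i j : Fin n) =>
      if (i : ℕ) = 0 ∧ (j : ℕ) = 0 then 0 else if (i : ℕ) = 0 ∨ (j : ℕ) = 0 then 1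
      else if i = j then 0 else 2) :
    M.charpoly = (X ^ 2 - C (2 * (n : ℝ) - 4) * X - C ((n : ℝ) - 1)) * (X + C 2) ^ (n - 2) := by
  haveI : NeZero n := ⟨by omega⟩
  have hUV : Ustar n * Vstar n = M + (2 : ℝ) • (1 : Matrix (Fin n) (Fin n) ℝ) := by
    ext i j
    simp only [Matrix.mul_apply, Fin.sum_univ_two, Ustar, Vstar, Matrix.of_apply,
      Matrix.add_apply, Matrix.smul_apply, Matrix.one_apply, hM, smul_eq_mul]
    have hij : i = j ↔ (i : ℕ) = (j : ℕ) := ⟨fun h => by rw [h], fun h => Fin.ext h⟩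
    by_cases hi : (i : ℕ) = 0 <;> by_cases hj : (j : ℕ) = 0 <;>
      by_cases h : i = j <;> simp_all
  have hVU : Vstar n * Ustar n = !![2 * ((n : ℝ) - 1), 1; (n : ℝ) - 1, 2] := by
    ext k l
    fin_cases k <;> fin_cases l <;>
      simp only [Matrix.mul_apply, Ustar, Vstar, Matrix.of_apply, Fin.mk_zero, Fin.mk_one,
        Fin.isValue, if_true, one_ne_zero, if_false, Matrix.cons_val_zero, Matrix.cons_val_one,
        Matrix.head_cons, Matrix.head_fin_const, Matrix.cons_val', Matrix.empty_val'] <;>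
      rw [sum_if_mul n (by omega)] <;> ring
  have key : ∀ r : ℝ, r ≠ -2 →
      (r • (1 : Matrix (Fin n) (Fin n) ℝ) - M).det
        = (r ^ 2 - (2 * (n : ℝ) - 4) * r - ((n : ℝ) - 1)) * (r + 2) ^ (n - 2) := by
    intro r hr
    have hr2 : r + 2 ≠ 0 := by intro h; apply hr; linarith
    have hMfac : M = Ustar n * Vstar n - (2 : ℝ) • (1 : Matrix (Fin n) (Fin n) ℝ) := by
      rw [hUV]; abel
    have hM' : r • (1 : Matrix (Fin n) (Fin n) ℝ) - M
        = (r + 2) • (1 + ((-(r + 2)⁻¹) • Ustar n) * Vstar n) := by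
      rw [hMfac, Matrix.smul_mul, smul_add, smul_smul,
        show (r + 2) * (-(r + 2)⁻¹) = -1 by field_simp]
      module
    rw [hM', Matrix.det_smul, Matrix.det_one_add_mul_comm, Matrix.mul_smul, hVU,
      Matrix.det_fin_two]
    simp only [Matrix.add_apply, Matrix.smul_apply, Matrix.one_apply, Matrix.of_apply, Matrix.cons_val_zero,
      Matrix.cons_val_one, Matrix.head_cons, Matrix.head_fin_const, if_true, one_ne_zero,
      zero_ne_one, if_false, Fin.isValue, smul_eq_mul, Fintype.card_fin]
    obtain ⟨m, rfl⟩ : ∃ m, n = m + 2 := ⟨n - 2, by omega⟩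
    have hms : m + 2 - 2 = m := by omega
    rw [hms, pow_add]
    push_cast
    field_simp
    ring
  apply Polynomial.eq_of_infinite_eval_eq
  apply Set.Infinite.mono (s := {x : ℝ | x ≠ -2})
  · intro r hr
    have hr' : r ≠ -2 := hr
    simp only [Set.mem_setOf_eq]
    have heval : eval r M.charpoly = (r • (1 : Matrix (Fin n) (Fin n) ℝ) - M).det := by
      rw [Matrix.charpoly, ← Polynomial.coe_evalRingHom, RingHom.map_det]
      congr 1
      ext i j
      by_cases h : i = j <;>
        simp [Matrix.map_apply, charmatrix_apply, Matrix.sub_apply, Matrix.smul_apply,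
          Matrix.one_apply, Matrix.diagonal_apply, h]
    rw [heval, key r hr']
    simp only [eval_mul, eval_pow, eval_add, eval_sub, eval_C, eval_X]
  · have h2 := (Set.finite_singleton (-2 : ℝ)).infinite_compl
    simpa [Set.compl_def] using h2
end

section
/- Let T be a tree on n ≥ 3 vertices that is not a star. Then the least eigenvalue of the eccentricity matrix of T is strictly less than −2. -/
open Matrix

/-- The eccentricity of a vertex: the largest distance from it to any vertex. -/
noncomputable def SimpleGraph.ecc {V : Type*} [Fintype V] (G : SimpleGraph V) (v : V) : ℕ :=
  Finset.univ.sup (G.dist v)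

/-- The eccentricity matrix of a graph: `ε(G)_{uw} = d(u,w)` if
`d(u,w) = min{e(u), e(w)}`, and `0` otherwise. -/
noncomputable def SimpleGraph.eccMatrix {V : Type*} [Fintype V] (G : SimpleGraph V) :
    Matrix V V ℝ :=
  Matrix.of fun u w =>
    if G.dist u w = min (G.ecc u) (G.ecc w) then (G.dist u w : ℝ) else 0

section Aux

lemma quad_lower_bound' {V : Type*} [Fintype V] [DecidableEq V] (M : Matrix V V ℝ)
    (hM : M.IsHermitian) (c : ℝ) (h : ∀ i, c ≤ hM.eigenvalues i) (x : V → ℝ) :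
    c * (x ⬝ᵥ x) ≤ x ⬝ᵥ (M *ᵥ x) := by
  have hU : (hM.eigenvectorUnitary : Matrix V V ℝ) * (star (hM.eigenvectorUnitary : Matrix V V ℝ)) = 1 :=
    (Matrix.mem_unitaryGroup_iff).mp hM.eigenvectorUnitary.2
  have hA : M - c • (1 : Matrix V V ℝ) =
      (hM.eigenvectorUnitary : Matrix V V ℝ) * diagonal (fun i => hM.eigenvalues i - c)
        * (star (hM.eigenvectorUnitary : Matrix V V ℝ)) := by
    conv_lhs => rw [hM.spectral_theorem]
    have : (c • (1 : Matrix V V ℝ)) =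
        (hM.eigenvectorUnitary : Matrix V V ℝ) * (c • (1 : Matrix V V ℝ))
          * (star (hM.eigenvectorUnitary : Matrix V V ℝ)) := by
      rw [mul_smul_comm, smul_mul_assoc, mul_one, hU]
    rw [Unitary.conjStarAlgAut_apply, this, ← sub_mul, ← mul_sub]
    congr 1
    congr 1
    ext i j
    by_cases hij : i = j <;> simp [diagonal, hij, RCLike.ofReal]
  have hpsd : (M - c • (1 : Matrix V V ℝ)).PosSemidef := by
    rw [hA]
    have : (star (hM.eigenvectorUnitary : Matrix V V ℝ)) = (hM.eigenvectorUnitary : Matrix V V ℝ)ᴴ := rfl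
    rw [this]
    refine (posSemidef_diagonal_iff.mpr ?_).mul_mul_conjTranspose_same _
    intro i; linarith [h i]
  have := hpsd.dotProduct_mulVec_nonneg x
  have hs : star x = x := by ext i; simp
  rw [hs, sub_mulVec, dotProduct_sub, smul_mulVec, one_mulVec, dotProduct_smul] at this
  simp only [smul_eq_mul] at this
  linarith

variable {V : Type*} {G : SimpleGraph V}

lemma unique_path_contra' (hT : G.IsTree) {a b : V} (p q : G.Walk a b)
    (hp : p.IsPath) (hq : q.IsPath) (hne : p ≠ q) : False :=
  hne (ExistsUnique.unique (hT.existsUnique_path a b) hp hq)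

lemma exists_mid_of_dist_two' {a b : V} (h : G.dist a b = 2) :
    ∃ c, G.Adj a c ∧ G.Adj c b := by
  obtain ⟨p, hp⟩ := SimpleGraph.exists_walk_of_dist_ne_zero (G := G) (u := a) (v := b) (by omega)
  rw [h] at hp
  cases p with
  | nil => simp at hp
  | cons h1 q =>
    cases q with
    | nil => simp at hp
    | cons h2 r =>
      cases r with
      | nil => exact ⟨_, h1, h2⟩
      | cons h3 s => simp [SimpleGraph.Walk.length_cons] at hp

lemma dist_two_of' (hc : G.Connected) {a b : V} (hne : a ≠ b) (hadj : ¬ G.Adj a b)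
    (hle : G.dist a b ≤ 2) : G.dist a b = 2 := by
  have h0 : G.dist a b ≠ 0 := by
    rw [ne_eq, hc.dist_eq_zero_iff]; exact hne
  have h1 : G.dist a b ≠ 1 := fun h => hadj (SimpleGraph.dist_eq_one_iff_adj.mp h)
  omega

lemma star_of_small_diam' [Fintype V] (hT : G.IsTree) (hn : 3 ≤ Fintype.card V)
    (hd : ∀ a b : V, G.dist a b ≤ 2) :
    ∃ v : V, ∀ w : V, w ≠ v → G.Adj v w := by
  classical
  have hc := hT.isConnected
  by_contra hstar
  push_neg at hstar
  have hne : Nonempty V := Fintype.card_pos_iff.mp (by omega)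
  obtain ⟨a⟩ := hne
  obtain ⟨b, hba, hab⟩ := hstar a
  obtain ⟨c, hac, hcb⟩ := exists_mid_of_dist_two' (dist_two_of' hc (Ne.symm hba) hab (hd a b))
  obtain ⟨z, hzc, hcz⟩ := hstar c
  have hacn : a ≠ c := hac.ne
  have hcbn : c ≠ b := hcb.ne
  have habn : a ≠ b := Ne.symm hba
  have hza : z ≠ a := by rintro rfl; exact hcz hac.symm
  obtain ⟨m, hcm, hmz⟩ := exists_mid_of_dist_two' (dist_two_of' hc (Ne.symm hzc) hcz (hd c z))
  have hcmn : c ≠ m := hcm.ne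
  have hmzn : m ≠ z := hmz.ne
  have hczn : c ≠ z := fun h => hzc h.symm
  by_cases haz : G.Adj a z
  · have hazn : a ≠ z := haz.ne
    by_cases hma : m = a
    · subst hma
      have hbz : b ≠ z := by rintro rfl; exact hab haz
      by_cases hbz' : G.Adj b z
      · refine unique_path_contra' hT
          (SimpleGraph.Walk.cons hbz'.symm SimpleGraph.Walk.nil)
          (SimpleGraph.Walk.cons haz.symm (SimpleGraph.Walk.cons hac
            (SimpleGraph.Walk.cons hcb SimpleGraph.Walk.nil)))
          ?_ ?_ ?_
        · simp [SimpleGraph.Walk.isPath_def]; tauto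
        · simp [SimpleGraph.Walk.isPath_def]; tauto
        · intro h; have := congrArg SimpleGraph.Walk.length h; simp at this
      · obtain ⟨p, hbp, hpz⟩ :=
          exists_mid_of_dist_two' (dist_two_of' hc hbz hbz' (hd b z))
        refine unique_path_contra' hT
          (SimpleGraph.Walk.cons hbp (SimpleGraph.Walk.cons hpz SimpleGraph.Walk.nil))
          (SimpleGraph.Walk.cons hcb.symm (SimpleGraph.Walk.cons hac.symm
            (SimpleGraph.Walk.cons haz SimpleGraph.Walk.nil)))
          ?_ ?_ ?_
        · have h1 := hbp.ne; have h2 := hpz.ne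
          simp [SimpleGraph.Walk.isPath_def]; tauto
        · simp [SimpleGraph.Walk.isPath_def]; tauto
        · intro h; have := congrArg SimpleGraph.Walk.length h; simp at this
    · refine unique_path_contra' hT
        (SimpleGraph.Walk.cons haz SimpleGraph.Walk.nil)
        (SimpleGraph.Walk.cons hac (SimpleGraph.Walk.cons hcm
          (SimpleGraph.Walk.cons hmz SimpleGraph.Walk.nil)))
        ?_ ?_ ?_
      · simp [SimpleGraph.Walk.isPath_def]; tauto
      · simp [SimpleGraph.Walk.isPath_def]; tauto
      · intro h; have := congrArg SimpleGraph.Walk.length h; simp at this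
  · obtain ⟨q, haq, hqz⟩ :=
      exists_mid_of_dist_two' (dist_two_of' hc (Ne.symm hza) haz (hd a z))
    have hqc : q ≠ c := by rintro rfl; exact hcz hqz
    have haqn := haq.ne; have hqzn := hqz.ne
    refine unique_path_contra' hT
      (SimpleGraph.Walk.cons hmz.symm (SimpleGraph.Walk.cons hcm.symm SimpleGraph.Walk.nil))
      (SimpleGraph.Walk.cons hqz.symm (SimpleGraph.Walk.cons haq.symm
        (SimpleGraph.Walk.cons hac SimpleGraph.Walk.nil)))
      ?_ ?_ ?_
    · simp [SimpleGraph.Walk.isPath_def]; tauto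
    · simp [SimpleGraph.Walk.isPath_def]; tauto
    · intro h; have := congrArg SimpleGraph.Walk.length h; simp at this

end Aux

/-- If `T` is a tree on `n ≥ 3` vertices which is not a star, then the least eigenvalue
of its eccentricity matrix is strictly less than `-2`. -/
theorem eccMatrix_least_eigenvalue_lt_of_not_star {V : Type*} [Fintype V] [DecidableEq V]
    (G : SimpleGraph V) (hT : G.IsTree) (hn : 3 ≤ Fintype.card V)
    (hstar : ¬ ∃ v : V, ∀ w : V, w ≠ v → G.Adj v w) :
    ∃ μ ∈ spectrum ℝ G.eccMatrix, μ < -2 := by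
  classical
  -- the eccentricity matrix is symmetric
  have hM : G.eccMatrix.IsHermitian := by
    ext i j
    simp only [conjTranspose_apply, SimpleGraph.eccMatrix, Matrix.of_apply, star_trivial]
    rw [SimpleGraph.dist_comm, min_comm]
  by_contra hcon
  push_neg at hcon
  have heig : ∀ i, (-2 : ℝ) ≤ hM.eigenvalues i := fun i =>
    hcon _ (hM.eigenvalues_mem_spectrum_real i)
  -- pick a diametral pair
  have hneV : Nonempty V := Fintype.card_pos_iff.mp (by omega)
  obtain ⟨a⟩ := hneV
  obtain ⟨⟨u, w⟩, -, hmax⟩ := Finset.exists_max_image (Finset.univ : Finset (V × V))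
    (fun p : V × V => G.dist p.1 p.2) ⟨(a, a), Finset.mem_univ _⟩
  simp only [Finset.mem_univ, forall_const] at hmax
  set d := G.dist u w with hd
  have hmax' : ∀ x y : V, G.dist x y ≤ d := fun x y => hmax (x, y)
  -- diameter is at least 3
  have hd3 : 3 ≤ d := by
    by_contra hlt
    exact hstar (star_of_small_diam' hT hn (fun x y => by
      have := hmax' x y; omega))
  have huw : u ≠ w := by
    rintro rfl
    rw [hd, SimpleGraph.dist_self] at hd3
    omega
  -- eccentricities of the diametral pair
  have heu : G.ecc u = d := by
    apply le_antisymm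
    · exact Finset.sup_le fun z _ => hmax' u z
    · rw [hd]; exact Finset.le_sup (f := G.dist u) (Finset.mem_univ w)
  have hew : G.ecc w = d := by
    apply le_antisymm
    · exact Finset.sup_le fun z _ => hmax' w z
    · have := Finset.le_sup (f := G.dist w) (Finset.mem_univ u)
      rwa [SimpleGraph.dist_comm] at this
  -- matrix entries
  have hMuw : G.eccMatrix u w = d := by
    simp [SimpleGraph.eccMatrix, heu, hew, hd]
  have hMwu : G.eccMatrix w u = d := by
    have hco : G.dist w u = G.dist u w := SimpleGraph.dist_comm
    simp [SimpleGraph.eccMatrix, heu, hew, hco, hd]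
  have hMuu : G.eccMatrix u u = 0 := by
    simp [SimpleGraph.eccMatrix]
  have hMww : G.eccMatrix w w = 0 := by
    simp [SimpleGraph.eccMatrix]
  -- test vector
  set x : V → ℝ := Pi.single u 1 - Pi.single w 1 with hx
  have hcol : G.eccMatrix *ᵥ x = fun i => G.eccMatrix i u - G.eccMatrix i w := by
    ext i
    simp [hx, mulVec_sub, mulVec_single]
  have hdot : x ⬝ᵥ (G.eccMatrix *ᵥ x) = -2 * d := by
    rw [hcol, hx]
    rw [sub_dotProduct, single_dotProduct, single_dotProduct]
    simp only [one_mul]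
    rw [hMuu, hMuw, hMwu, hMww]
    ring
  have hxx : x ⬝ᵥ x = 2 := by
    rw [hx, sub_dotProduct, single_dotProduct, single_dotProduct]
    simp [Pi.single_eq_same, Pi.single_eq_of_ne huw, Pi.single_eq_of_ne (Ne.symm huw)]
    norm_num
  have hq := quad_lower_bound' G.eccMatrix hM (-2) heig x
  rw [hdot, hxx] at hq
  have : (3 : ℝ) ≤ d := by exact_mod_cast hd3
  linarith
end

section
/- Let T be a tree on n ≥ 3 vertices. Then the least eigenvalue of its eccentricity matrix is at most −2, with equality if and only if T is the star K_{1,n−1}. -/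
open Matrix

section Spectral

variable {V : Type*} [Fintype V] [DecidableEq V] {A : Matrix V V ℝ}

lemma EccAux.real_spectrum_eq_range (hA : A.IsHermitian) :
    spectrum ℝ A = Set.range hA.eigenvalues := by
  apply Set.Subset.antisymm
  · intro μ hμ
    rw [spectrum.mem_iff] at hμ
    have hdet : (algebraMap ℝ (Matrix V V ℝ) μ - A).det = 0 := by
      by_contra h
      exact hμ ((Matrix.isUnit_iff_isUnit_det _).mpr (isUnit_iff_ne_zero.mpr h))
    set U : Matrix V V ℝ := (hA.eigenvectorUnitary : Matrix V V ℝ) with hU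
    have hUU : U * star U = 1 := Matrix.mem_unitaryGroup_iff.mp hA.eigenvectorUnitary.2
    have hAeq : A = U * diagonal hA.eigenvalues * star U := by
      have := hA.spectral_theorem
      simpa [Function.comp] using this
    have h1 : algebraMap ℝ (Matrix V V ℝ) μ = U * (diagonal (fun _ : V => μ)) * star U := by
      have h2 : (diagonal (fun _ : V => μ)) = μ • (1 : Matrix V V ℝ) := by
        rw [Matrix.smul_one_eq_diagonal]
      rw [h2, Matrix.mul_smul, Matrix.smul_mul, Matrix.mul_one, hUU,
        Matrix.smul_one_eq_diagonal, Matrix.algebraMap_eq_diagonal, Pi.algebraMap_def]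
      simp
    have hfact : algebraMap ℝ (Matrix V V ℝ) μ - A
        = U * diagonal (fun i => μ - hA.eigenvalues i) * star U := by
      rw [h1]; nth_rewrite 1 [hAeq]
      rw [← Matrix.sub_mul, ← Matrix.mul_sub, Matrix.diagonal_sub]
    have hdet2 : (∏ i, (μ - hA.eigenvalues i)) = 0 := by
      have := hdet
      rw [hfact, Matrix.det_mul, Matrix.det_mul] at this
      rw [Matrix.det_diagonal] at this
      have hUdet : U.det * (star U).det = 1 := by
        rw [← Matrix.det_mul, hUU, Matrix.det_one]
      rcases mul_eq_zero.mp this with h | h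
      · rcases mul_eq_zero.mp h with h' | h'
        · exact absurd h' (left_ne_zero_of_mul_eq_one hUdet)
        · exact h'
      · exact absurd h (right_ne_zero_of_mul_eq_one hUdet)
    obtain ⟨i, _, hi⟩ := Finset.prod_eq_zero_iff.mp hdet2
    exact ⟨i, by linarith [sub_eq_zero.mp hi]⟩
  · rintro μ ⟨i, rfl⟩
    exact hA.eigenvalues_mem_spectrum_real i

lemma EccAux.mem_spectrum_of_eigenvector {μ : ℝ} {x : V → ℝ} (hx : x ≠ 0)
    (h : A *ᵥ x = μ • x) : μ ∈ spectrum ℝ A := by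
  rw [spectrum.mem_iff]
  intro hunit
  have hker : (algebraMap ℝ (Matrix V V ℝ) μ - A) *ᵥ x = 0 := by
    rw [Matrix.sub_mulVec, Algebra.algebraMap_eq_smul_one, Matrix.smul_mulVec,
      Matrix.one_mulVec, h, sub_self]
  have hdet : (algebraMap ℝ (Matrix V V ℝ) μ - A).det = 0 :=
    Matrix.exists_mulVec_eq_zero_iff.mp ⟨x, hx, hker⟩
  have := (Matrix.isUnit_iff_isUnit_det _).mp hunit
  rw [hdet] at this
  exact not_isUnit_zero this

/-- Rayleigh-type bound: if `c` is below every eigenvalue then `c‖x‖² ≤ xᵀAx`. -/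
lemma EccAux.rayleigh_lower (hA : A.IsHermitian) (x : V → ℝ) {c : ℝ}
    (hc : ∀ i, c ≤ hA.eigenvalues i) :
    c * (x ⬝ᵥ x) ≤ x ⬝ᵥ (A *ᵥ x) := by
  set U : Matrix V V ℝ := (hA.eigenvectorUnitary : Matrix V V ℝ) with hU
  have hUU : U * star U = 1 := Matrix.mem_unitaryGroup_iff.mp hA.eigenvectorUnitary.2
  have hAeq : A = U * diagonal hA.eigenvalues * star U := by
    have := hA.spectral_theorem
    simpa [Function.comp] using this
  set y : V → ℝ := star U *ᵥ x with hy
  have hyx : x ᵥ* U = y := by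
    rw [hy, Matrix.star_eq_conjTranspose, Matrix.conjTranspose_eq_transpose_of_trivial,
      Matrix.mulVec_transpose]
  have hxx : x ⬝ᵥ x = y ⬝ᵥ y := by
    have : y ⬝ᵥ y = x ⬝ᵥ x := by
      calc y ⬝ᵥ y = (x ᵥ* U) ⬝ᵥ y := by rw [hyx]
        _ = x ⬝ᵥ (U *ᵥ y) := (Matrix.dotProduct_mulVec x U y).symm
        _ = x ⬝ᵥ ((U * star U) *ᵥ x) := by rw [hy, Matrix.mulVec_mulVec]
        _ = x ⬝ᵥ x := by rw [hUU, Matrix.one_mulVec]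
    exact this.symm
  have hquad : x ⬝ᵥ (A *ᵥ x) = ∑ i, hA.eigenvalues i * (y i * y i) := by
    calc x ⬝ᵥ (A *ᵥ x)
        = x ⬝ᵥ (U *ᵥ (diagonal hA.eigenvalues *ᵥ (star U *ᵥ x))) := by
          rw [Matrix.mulVec_mulVec, Matrix.mulVec_mulVec, ← hAeq]
      _ = (x ᵥ* U) ⬝ᵥ (diagonal hA.eigenvalues *ᵥ y) := by
          rw [Matrix.dotProduct_mulVec, hy]
      _ = y ⬝ᵥ (diagonal hA.eigenvalues *ᵥ y) := by rw [hyx]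
      _ = ∑ i, hA.eigenvalues i * (y i * y i) := by
          simp only [dotProduct, Matrix.mulVec_diagonal]
          exact Finset.sum_congr rfl fun i _ => by ring
  rw [hxx, hquad, dotProduct, Finset.mul_sum]
  exact Finset.sum_le_sum fun i _ => mul_le_mul_of_nonneg_right (hc i) (mul_self_nonneg _)

/-- The quadratic form of the pair-difference test vector. -/
lemma EccAux.quad_pair (A : Matrix V V ℝ) {u w : V} (huw : u ≠ w) :
    (fun z => if z = u then (1:ℝ) else if z = w then -1 else 0) ⬝ᵥ
      (A *ᵥ (fun z => if z = u then (1:ℝ) else if z = w then -1 else 0))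
    = A u u - A u w - A w u + A w w := by
  set x : V → ℝ := fun z => if z = u then (1:ℝ) else if z = w then -1 else 0 with hxdef
  have hmul : ∀ z, (A *ᵥ x) z = A z u - A z w := by
    intro z
    simp only [Matrix.mulVec, dotProduct]
    have : ∀ t, A z t * x t = (if t = u then A z t else 0) - (if t = w then A z t else 0) := by
      intro t
      by_cases h1 : t = u
      · subst h1; simp [hxdef, huw]
      · by_cases h2 : t = w
        · subst h2; simp [hxdef, h1]
        · simp [hxdef, h1, h2]
    rw [Finset.sum_congr rfl fun t _ => this t, Finset.sum_sub_distrib,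
      Finset.sum_ite_eq' Finset.univ u (A z), Finset.sum_ite_eq' Finset.univ w (A z)]
    simp
  simp only [dotProduct]
  have key : ∀ z, x z * (A *ᵥ x) z =
      (if z = u then A z u - A z w else 0) - (if z = w then A z u - A z w else 0) := by
    intro z
    rw [hmul z]
    by_cases h1 : z = u
    · subst h1; simp [hxdef, huw]
    · by_cases h2 : z = w
      · subst h2; simp [hxdef, h1]
      · simp [hxdef, h1, h2]
  rw [Finset.sum_congr rfl fun z _ => key z, Finset.sum_sub_distrib,
    Finset.sum_ite_eq' Finset.univ u (fun z => A z u - A z w),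
    Finset.sum_ite_eq' Finset.univ w (fun z => A z u - A z w)]
  simp; ring

lemma EccAux.dot_pair {u w : V} (huw : u ≠ w) :
    (fun z => if z = u then (1:ℝ) else if z = w then -1 else 0) ⬝ᵥ
      (fun z => if z = u then (1:ℝ) else if z = w then -1 else 0) = 2 := by
  simp only [dotProduct]
  have : ∀ z, (if z = u then (1:ℝ) else if z = w then -1 else 0) *
      (if z = u then (1:ℝ) else if z = w then -1 else 0)
      = (if z = u then 1 else 0) + (if z = w then 1 else 0) := by
    intro z
    by_cases h1 : z = u
    · subst h1; simp [huw]
    · by_cases h2 : z = w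
      · subst h2; simp [h1]
      · simp [h1, h2]
  rw [Finset.sum_congr rfl fun z _ => this z, Finset.sum_add_distrib,
    Finset.sum_ite_eq' Finset.univ u (fun _ => (1:ℝ)),
    Finset.sum_ite_eq' Finset.univ w (fun _ => (1:ℝ))]
  norm_num

/-- The quadratic form of the star matrix is bounded below by `-2‖x‖²`. -/
lemma EccAux.star_quad (v : V) (x : V → ℝ) :
    -2 * (x ⬝ᵥ x) ≤ x ⬝ᵥ ((Matrix.of fun u w : V =>
      if u = w then (0:ℝ) else if u = v ∨ w = v then 1 else 2) *ᵥ x) := by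
  set S : Matrix V V ℝ := Matrix.of fun u w : V =>
      if u = w then (0:ℝ) else if u = v ∨ w = v then 1 else 2 with hS
  set s : ℝ := ∑ u, x u with hs
  set a : ℝ := x v with ha
  have hrow : ∀ u, (S *ᵥ x) u = if u = v then s - a else 2*s - a - 2*x u := by
    intro u
    simp only [Matrix.mulVec, dotProduct, hS, Matrix.of_apply]
    by_cases hu : u = v
    · subst hu
      rw [if_pos rfl]
      have : ∀ t, (if u = t then (0:ℝ) else if u = u ∨ t = u then 1 else 2) * x t
          = x t - (if t = u then x t else 0) := by
        intro t
        by_cases h1 : t = u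
        · subst h1; simp
        · have h1' : u ≠ t := fun h => h1 h.symm
          rw [if_neg h1', if_pos (Or.inl rfl), if_neg h1]; ring
      rw [Finset.sum_congr rfl fun t _ => this t, Finset.sum_sub_distrib,
        Finset.sum_ite_eq' Finset.univ u x]
      simp [hs, ha]
    · rw [if_neg hu]
      have : ∀ t, (if u = t then (0:ℝ) else if u = v ∨ t = v then 1 else 2) * x t
          = 2 * x t - (if t = v then x t else 0) - (if t = u then 2 * x t else 0) := by
        intro t
        by_cases h1 : t = u
        · subst h1; rw [if_pos rfl, if_neg hu, if_pos rfl]; ring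
        · have h1' : u ≠ t := fun h => h1 h.symm
          rw [if_neg h1']
          by_cases h2 : t = v
          · rw [if_pos (Or.inr h2), if_pos h2, if_neg h1]; ring
          · rw [if_neg (by tauto), if_neg h2, if_neg h1]; ring
      rw [Finset.sum_congr rfl fun t _ => this t, Finset.sum_sub_distrib, Finset.sum_sub_distrib,
        Finset.sum_ite_eq' Finset.univ v x, Finset.sum_ite_eq' Finset.univ u (fun t => 2 * x t),
        ← Finset.mul_sum]
      simp [hs, ha]
  have hsum : x ⬝ᵥ (S *ᵥ x) = 2*s*s - a*s - 2*(x ⬝ᵥ x) + a*(2*a - s) := by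
    simp only [dotProduct]
    have key : ∀ u, x u * (S *ᵥ x) u
        = 2*s*(x u) - a*(x u) - 2*(x u * x u) + (if u = v then a*(2*a - s) else 0) := by
      intro u
      rw [hrow u]
      by_cases hu : u = v
      · subst hu; rw [if_pos rfl, if_pos rfl, ← ha]; ring
      · rw [if_neg hu, if_neg hu]; ring
    rw [Finset.sum_congr rfl fun u _ => key u]
    rw [Finset.sum_add_distrib, Finset.sum_sub_distrib, Finset.sum_sub_distrib,
      Finset.sum_ite_eq' Finset.univ v (fun _ => a*(2*a - s)), ← Finset.mul_sum, ← Finset.mul_sum,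
      ← Finset.mul_sum, ← hs]
    simp [dotProduct]
  rw [hsum]
  nlinarith [sq_nonneg (s - a), sq_nonneg s, sq_nonneg a, sq_nonneg (x ⬝ᵥ x)]

end Spectral

namespace EccAux

open SimpleGraph

set_option linter.unusedSectionVars false

section Graph

variable {V : Type*} [Fintype V] [DecidableEq V] {G : SimpleGraph V}

lemma tree_no_two_paths (hT : G.IsTree) {a b : V} {p q : G.Walk a b}
    (hp : p.IsPath) (hq : q.IsPath) (hne : p ≠ q) : False :=
  hne ((hT.existsUnique_path a b).unique hp hq)

lemma isPath_two {a b c : V} (h1 : G.Adj a b) (h2 : G.Adj b c) (hac : a ≠ c) :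
    (Walk.cons h1 (Walk.cons h2 Walk.nil)).IsPath := by
  simp [Walk.isPath_def, h1.ne, h2.ne, hac]

lemma isPath_three {a b c d : V} (h1 : G.Adj a b) (h2 : G.Adj b c) (h3 : G.Adj c d)
    (hac : a ≠ c) (had : a ≠ d) (hbd : b ≠ d) :
    (Walk.cons h1 (Walk.cons h2 (Walk.cons h3 Walk.nil))).IsPath := by
  simp [Walk.isPath_def, h1.ne, h2.ne, h3.ne, hac, had, hbd]

/-- Contradiction from a path of length 2 and one of length 3 between the same endpoints. -/
lemma no_paths_23 (hT : G.IsTree) {a b c d e : V}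
    (h1 : G.Adj a b) (h2 : G.Adj b c)
    (k1 : G.Adj a d) (k2 : G.Adj d e) (k3 : G.Adj e c)
    (hac : a ≠ c) (hae : a ≠ e) (hdc : d ≠ c) : False := by
  refine tree_no_two_paths hT (isPath_two h1 h2 hac) (isPath_three k1 k2 k3 hae hac hdc) ?_
  intro h
  have := congrArg Walk.length h
  simp [Walk.length_cons] at this

/-- Contradiction from a path of length 1 and one of length 2 between the same endpoints. -/
lemma no_paths_12 (hT : G.IsTree) {a b c : V}
    (h1 : G.Adj a c) (k1 : G.Adj a b) (k2 : G.Adj b c) : False := by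
  have hp1 : (Walk.cons h1 Walk.nil).IsPath := by simp [Walk.isPath_def, h1.ne]
  refine tree_no_two_paths hT hp1 (isPath_two k1 k2 h1.ne) ?_
  intro h
  have := congrArg Walk.length h
  simp [Walk.length_cons] at this

lemma exists_mid {a b : V} (h : G.dist a b = 2) : ∃ y, G.Adj a y ∧ G.Adj y b := by
  obtain ⟨p, hl⟩ := SimpleGraph.exists_walk_of_dist_ne_zero (G := G) (u := a) (v := b) (by omega)
  rw [h] at hl
  cases p with
  | nil => simp at hl
  | cons h1 q =>
    cases q with
    | nil => simp at hl
    | cons h2 r =>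
      cases r with
      | nil => exact ⟨_, h1, h2⟩
      | cons h3 r' => simp [Walk.length_cons] at hl

lemma dist_eq_two (hc : G.Connected) {a b : V} (hne : a ≠ b) (hnadj : ¬G.Adj a b)
    (hle : G.dist a b ≤ 2) : G.dist a b = 2 := by
  have h0 := hc.pos_dist_of_ne hne
  have h1 : G.dist a b ≠ 1 := fun h => hnadj (SimpleGraph.dist_eq_one_iff_adj.mp h)
  omega

/-- Contradiction from two distinct paths of length 2 between the same endpoints. -/
lemma no_paths_22 (hT : G.IsTree) {a b c m : V}
    (h1 : G.Adj a b) (h2 : G.Adj b c) (k1 : G.Adj a m) (k2 : G.Adj m c)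
    (hac : a ≠ c) (hbm : b ≠ m) : False := by
  refine tree_no_two_paths hT (isPath_two h1 h2 hac) (isPath_two k1 k2 hac) ?_
  intro h
  have hs := congrArg Walk.support h
  simp [Walk.support_cons] at hs
  exact hbm hs

/-- A tree on ≥ 3 vertices with all distances ≤ 2 is a star. -/
lemma center_of_dist_le_two (hT : G.IsTree) (hn : 3 ≤ Fintype.card V)
    (h2 : ∀ a b : V, G.dist a b ≤ 2) : ∃ v : V, ∀ w : V, w ≠ v → G.Adj v w := by
  have hc : G.Connected := hT.isConnected
  obtain ⟨u, w, huw, hnadj⟩ : ∃ u w : V, u ≠ w ∧ ¬G.Adj u w := by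
    by_contra hall
    push_neg at hall
    obtain ⟨a, b, hab⟩ := Fintype.exists_pair_of_one_lt_card (α := V) (by omega)
    obtain ⟨c, hc1, hc2⟩ : ∃ c : V, c ≠ a ∧ c ≠ b := by
      have hcard : (({a, b} : Finset V)ᶜ).Nonempty := by
        rw [← Finset.card_pos, Finset.card_compl]
        have h1 : ({a, b} : Finset V).card ≤ 2 := (Finset.card_insert_le _ _).trans (by simp)
        omega
      obtain ⟨c, hcmem⟩ := hcard
      simp only [Finset.mem_compl, Finset.mem_insert, Finset.mem_singleton, not_or] at hcmem
      exact ⟨c, hcmem.1, hcmem.2⟩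
    exact no_paths_12 hT (hall a b hab) (hall a c (Ne.symm hc1)) (hall c b hc2)
  obtain ⟨v, hv1, hv2⟩ := exists_mid (dist_eq_two hc huw hnadj (h2 u w))
  refine ⟨v, fun z hz => ?_⟩
  by_contra hnvz
  have hzu : z ≠ u := fun h => hnvz (h ▸ hv1.symm)
  have hzw : z ≠ w := fun h => hnvz (h ▸ hv2)
  obtain ⟨y, hy1, hy2⟩ := exists_mid (dist_eq_two hc (Ne.symm hz) hnvz (h2 v z))
  by_cases hyu : y = u
  · subst hyu
    by_cases hzwadj : G.Adj z w
    · exact no_paths_22 hT hv1 hv2 hy2 hzwadj huw (fun h => hz h.symm)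
    · obtain ⟨t, ht1, ht2⟩ := exists_mid (dist_eq_two hc hzw hzwadj (h2 z w))
      exact no_paths_23 hT ht1 ht2 hy2.symm hv1 hv2 hzw hz huw
  · by_cases hyw : y = w
    · subst hyw
      by_cases hzuadj : G.Adj z u
      · exact no_paths_22 hT hv1 hv2 hzuadj.symm hy2.symm huw (fun h => hz h.symm)
      · obtain ⟨t, ht1, ht2⟩ := exists_mid
          (dist_eq_two hc hzu (fun h => hzuadj h) (h2 z u))
        exact no_paths_23 hT ht1 ht2 hy2.symm hv2.symm hv1.symm hzu hz (Ne.symm huw)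
    · by_cases hzuadj : G.Adj z u
      · exact no_paths_22 hT hy2.symm hy1.symm hzuadj hv1 hz
          (fun h => hyu (by rw [h]))
      · obtain ⟨t, ht1, ht2⟩ := exists_mid (dist_eq_two hc hzu hzuadj (h2 z u))
        by_cases hty : t = y
        · subst hty
          exact no_paths_12 hT hv1 ht2.symm hy1.symm
        · exact no_paths_23 hT ht1 ht2 hy2.symm hy1.symm hv1.symm hzu hz hyu

end Graph

end EccAux

namespace EccAux

open SimpleGraph

set_option linter.unusedSectionVars false

section Star

variable {V : Type*} [Fintype V] [DecidableEq V] {G : SimpleGraph V} {v : V}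

lemma star_dist_center (hv : ∀ w : V, w ≠ v → G.Adj v w) {w : V} (hw : w ≠ v) :
    G.dist v w = 1 :=
  SimpleGraph.dist_eq_one_iff_adj.mpr (hv w hw)

lemma star_leaf_nonadj (hT : G.IsTree) (hv : ∀ w : V, w ≠ v → G.Adj v w)
    {w w' : V} (hw : w ≠ v) (hw' : w' ≠ v) : ¬G.Adj w w' :=
  fun h => no_paths_12 hT h (hv w hw).symm (hv w' hw')

lemma star_dist_leaves (hT : G.IsTree) (hv : ∀ w : V, w ≠ v → G.Adj v w)
    {w w' : V} (hw : w ≠ v) (hw' : w' ≠ v) (hne : w ≠ w') : G.dist w w' = 2 := by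
  have hub : G.dist w w' ≤ 2 := by
    have := SimpleGraph.dist_le (Walk.cons (hv w hw).symm (Walk.cons (hv w' hw') Walk.nil))
    simpa using this
  exact dist_eq_two hT.isConnected hne (star_leaf_nonadj hT hv hw hw') hub

lemma exists_two_leaves (hn : 3 ≤ Fintype.card V) (v : V) :
    ∃ w1 w2 : V, w1 ≠ v ∧ w2 ≠ v ∧ w1 ≠ w2 := by
  have h : 1 < (({v} : Finset V)ᶜ).card := by
    rw [Finset.card_compl]
    simp only [Finset.card_singleton]
    omega
  obtain ⟨a, b, ha, hb, hab⟩ := Finset.one_lt_card_iff.mp h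
  simp only [Finset.mem_compl, Finset.mem_singleton] at ha hb
  exact ⟨a, b, ha, hb, hab⟩

lemma star_ecc_center (hn : 3 ≤ Fintype.card V) (hv : ∀ w : V, w ≠ v → G.Adj v w) :
    G.ecc v = 1 := by
  obtain ⟨w1, w2, h1, h2, h12⟩ := exists_two_leaves hn v
  apply le_antisymm
  · apply Finset.sup_le
    intro b _
    by_cases hb : b = v
    · subst hb; simp [SimpleGraph.dist_self]
    · rw [star_dist_center hv hb]
  · calc 1 = G.dist v w1 := (star_dist_center hv h1).symm
      _ ≤ _ := Finset.le_sup (Finset.mem_univ w1)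

lemma star_ecc_leaf (hT : G.IsTree) (hn : 3 ≤ Fintype.card V)
    (hv : ∀ w : V, w ≠ v → G.Adj v w) {w : V} (hw : w ≠ v) : G.ecc w = 2 := by
  obtain ⟨w1, w2, h1, h2, h12⟩ := exists_two_leaves hn v
  obtain ⟨w', hw'v, hww'⟩ : ∃ w' : V, w' ≠ v ∧ w ≠ w' := by
    by_cases h : w = w1
    · exact ⟨w2, h2, by rw [h]; exact h12⟩
    · exact ⟨w1, h1, h⟩
  apply le_antisymm
  · apply Finset.sup_le
    intro b _
    by_cases hb : b = w
    · subst hb; simp [SimpleGraph.dist_self]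
    · by_cases hbv : b = v
      · subst hbv; rw [SimpleGraph.dist_comm, star_dist_center hv hw]; omega
      · rw [star_dist_leaves hT hv hw hbv (fun h => hb h.symm)]
  · calc 2 = G.dist w w' := (star_dist_leaves hT hv hw hw'v hww').symm
      _ ≤ _ := Finset.le_sup (Finset.mem_univ w')

lemma star_eccMatrix (hT : G.IsTree) (hn : 3 ≤ Fintype.card V)
    (hv : ∀ w : V, w ≠ v → G.Adj v w) :
    G.eccMatrix = Matrix.of fun u w : V =>
      if u = w then (0:ℝ) else if u = v ∨ w = v then 1 else 2 := by
  ext u w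
  simp only [SimpleGraph.eccMatrix, Matrix.of_apply]
  by_cases huw : u = w
  · subst huw
    rw [if_pos rfl]
    simp [SimpleGraph.dist_self]
  · rw [if_neg huw]
    by_cases hu : u = v
    · have hwv : w ≠ v := fun h => huw (hu.trans h.symm)
      rw [hu, if_pos (Or.inl rfl), star_dist_center hv hwv, star_ecc_center hn hv,
        star_ecc_leaf hT hn hv hwv]
      norm_num
    · by_cases hw : w = v
      · rw [hw, if_pos (Or.inr rfl), SimpleGraph.dist_comm, star_dist_center hv hu,
          star_ecc_center hn hv, star_ecc_leaf hT hn hv hu]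
        norm_num
      · rw [star_dist_leaves hT hv hu hw huw, star_ecc_leaf hT hn hv hu,
          star_ecc_leaf hT hn hv hw]
        norm_num [hu, hw]

lemma eccMatrix_isHermitian (G : SimpleGraph V) : G.eccMatrix.IsHermitian := by
  apply Matrix.ext
  intro i j
  rw [Matrix.conjTranspose_apply]
  simp only [SimpleGraph.eccMatrix, Matrix.of_apply, star_trivial]
  rw [SimpleGraph.dist_comm, min_comm]

lemma eccMatrix_diag (G : SimpleGraph V) (z : V) : G.eccMatrix z z = 0 := by
  simp [SimpleGraph.eccMatrix, SimpleGraph.dist_self]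

end Star

end EccAux

/-- For a tree `T` on `n ≥ 3` vertices, the least eigenvalue of the eccentricity matrix
is at most `-2`, with equality if and only if `T` is the star `K_{1,n-1}`. -/
theorem eccMatrix_least_eigenvalue_le_neg_two {V : Type*} [Fintype V] [DecidableEq V]
    (G : SimpleGraph V) (hT : G.IsTree) (hn : 3 ≤ Fintype.card V) :
    sInf (spectrum ℝ G.eccMatrix) ≤ -2 ∧
      (sInf (spectrum ℝ G.eccMatrix) = -2 ↔ ∃ v : V, ∀ w : V, w ≠ v → G.Adj v w) := by
  classical
  have hnE : Nonempty V := Fintype.card_pos_iff.mp (by omega)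
  have hherm : G.eccMatrix.IsHermitian := EccAux.eccMatrix_isHermitian G
  have hbdd : BddBelow (spectrum ℝ G.eccMatrix) := by
    rw [EccAux.real_spectrum_eq_range hherm]
    exact (Set.finite_range _).bddBelow
  by_cases hstar : ∃ v : V, ∀ w : V, w ≠ v → G.Adj v w
  · obtain ⟨v, hv⟩ := hstar
    have hmat := EccAux.star_eccMatrix hT hn hv
    obtain ⟨w1, w2, h1, h2, h12⟩ := EccAux.exists_two_leaves hn v
    set x : V → ℝ := fun z => if z = w1 then (1:ℝ) else if z = w2 then -1 else 0 with hx
    have hxne : x ≠ 0 := by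
      intro h
      have := congrFun h w1
      simp [hx] at this
    have heig : G.eccMatrix *ᵥ x = (-2 : ℝ) • x := by
      rw [hmat]
      funext z
      have hz : ((Matrix.of fun u w : V =>
            if u = w then (0:ℝ) else if u = v ∨ w = v then 1 else 2) *ᵥ x) z
          = (if z = w1 then (0:ℝ) else if z = v ∨ w1 = v then 1 else 2)
            - (if z = w2 then (0:ℝ) else if z = v ∨ w2 = v then 1 else 2) := by
        simp only [Matrix.mulVec, dotProduct, Matrix.of_apply]
        have key : ∀ t, (if z = t then (0:ℝ) else if z = v ∨ t = v then 1 else 2) * x t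
            = (if t = w1 then (if z = t then (0:ℝ) else if z = v ∨ t = v then 1 else 2) else 0)
              - (if t = w2 then
                  (if z = t then (0:ℝ) else if z = v ∨ t = v then 1 else 2) else 0) := by
          intro t
          by_cases ht1 : t = w1
          · subst ht1
            simp [hx, h12]
          · by_cases ht2 : t = w2
            · subst ht2
              simp [hx, ht1]
            · simp [hx, ht1, ht2]
        rw [Finset.sum_congr rfl fun t _ => key t, Finset.sum_sub_distrib,
          Finset.sum_ite_eq' Finset.univ w1
            (fun t => if z = t then (0:ℝ) else if z = v ∨ t = v then 1 else 2),
          Finset.sum_ite_eq' Finset.univ w2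
            (fun t => if z = t then (0:ℝ) else if z = v ∨ t = v then 1 else 2)]
        simp
      rw [hz]
      show _ = (-2 : ℝ) * x z
      by_cases hz1 : z = w1
      · subst hz1
        rw [if_pos rfl, if_neg h12, if_neg (by tauto)]
        simp [hx]
      · by_cases hz2 : z = w2
        · subst hz2
          rw [if_neg hz1, if_pos rfl, if_neg (by tauto)]
          simp [hx, hz1]
        · rw [if_neg hz1, if_neg hz2]
          have hxz : x z = 0 := by simp [hx, hz1, hz2]
          rw [hxz, mul_zero]
          by_cases hzv : z = v
          · rw [if_pos (Or.inl hzv), if_pos (Or.inl hzv)]; ring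
          · rw [if_neg (by tauto), if_neg (by tauto)]; ring
    have hmem : (-2 : ℝ) ∈ spectrum ℝ G.eccMatrix :=
      EccAux.mem_spectrum_of_eigenvector hxne heig
    have hlb : ∀ μ ∈ spectrum ℝ G.eccMatrix, (-2:ℝ) ≤ μ := by
      intro μ hμ
      rw [EccAux.real_spectrum_eq_range hherm] at hμ
      obtain ⟨i, rfl⟩ := hμ
      set u : V → ℝ := ⇑(hherm.eigenvectorBasis i) with hu
      have hmv : G.eccMatrix *ᵥ u = hherm.eigenvalues i • u := hherm.mulVec_eigenvectorBasis i
      have hq : -2 * (u ⬝ᵥ u) ≤ u ⬝ᵥ (G.eccMatrix *ᵥ u) := by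
        rw [hmat]
        exact EccAux.star_quad v u
      rw [hmv, dotProduct_smul, smul_eq_mul] at hq
      have hupos : 0 < u ⬝ᵥ u := by
        have hnz : u ≠ 0 := by
          have hb := hherm.eigenvectorBasis.orthonormal.ne_zero i
          intro h
          exact hb (by ext j; exact congrFun h j)
        have hge : 0 ≤ u ⬝ᵥ u := Finset.sum_nonneg fun j _ => mul_self_nonneg _
        rcases hge.lt_or_eq with h | h
        · exact h
        · exact absurd (dotProduct_self_eq_zero.mp h.symm) hnz
      exact le_of_mul_le_mul_right hq hupos
    have heq : sInf (spectrum ℝ G.eccMatrix) = -2 :=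
      le_antisymm (csInf_le hbdd hmem) (le_csInf ⟨-2, hmem⟩ hlb)
    exact ⟨le_of_eq heq, ⟨fun _ => ⟨v, hv⟩, fun _ => heq⟩⟩
  · obtain ⟨⟨u, w⟩, -, hmax⟩ := Finset.exists_max_image Finset.univ
      (fun p : V × V => G.dist p.1 p.2) ⟨(Classical.arbitrary V, Classical.arbitrary V),
        Finset.mem_univ _⟩
    have hmax' : ∀ a b : V, G.dist a b ≤ G.dist u w := fun a b => hmax (a, b) (Finset.mem_univ _)
    have hd3 : 3 ≤ G.dist u w := by
      by_contra h
      push_neg at h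
      exact hstar (EccAux.center_of_dist_le_two hT hn
        (fun a b => by have := hmax' a b; omega))
    have huw : u ≠ w := by
      intro h
      subst h
      simp [SimpleGraph.dist_self] at hd3
    have heccu : G.ecc u = G.dist u w :=
      le_antisymm (Finset.sup_le fun b _ => hmax' u b) (Finset.le_sup (Finset.mem_univ w))
    have heccw : G.ecc w = G.dist u w := by
      apply le_antisymm (Finset.sup_le fun b _ => hmax' w b)
      calc G.dist u w = G.dist w u := SimpleGraph.dist_comm
        _ ≤ _ := Finset.le_sup (Finset.mem_univ u)
    have hentry : G.eccMatrix u w = (G.dist u w : ℝ) := by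
      simp only [SimpleGraph.eccMatrix, Matrix.of_apply]
      rw [heccu, heccw, min_self, if_pos rfl]
    have hentry' : G.eccMatrix w u = (G.dist u w : ℝ) := by
      simp only [SimpleGraph.eccMatrix, Matrix.of_apply]
      rw [SimpleGraph.dist_comm, heccu, heccw, min_comm, min_self, if_pos rfl]
    obtain ⟨i0, -, hi0⟩ := Finset.exists_min_image Finset.univ hherm.eigenvalues
      ⟨Classical.arbitrary V, Finset.mem_univ _⟩
    have hmem0 : hherm.eigenvalues i0 ∈ spectrum ℝ G.eccMatrix :=
      hherm.eigenvalues_mem_spectrum_real i0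
    have hray := EccAux.rayleigh_lower hherm
      (fun z => if z = u then (1:ℝ) else if z = w then -1 else 0)
      (fun i => hi0 i (Finset.mem_univ i))
    rw [EccAux.dot_pair huw, EccAux.quad_pair _ huw, hentry, hentry',
      EccAux.eccMatrix_diag G u, EccAux.eccMatrix_diag G w] at hray
    have hd3' : (3:ℝ) ≤ (G.dist u w : ℝ) := by exact_mod_cast hd3
    have hle : hherm.eigenvalues i0 ≤ -3 := by linarith
    have hsle : sInf (spectrum ℝ G.eccMatrix) ≤ -3 := (csInf_le hbdd hmem0).trans hle
    exact ⟨hsle.trans (by norm_num),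
      ⟨fun h => absurd (h ▸ hsle) (by norm_num), fun hs => absurd hs hstar⟩⟩
end

section
/- If T is a tree (with at least 2 vertices), then its eccentricity matrix ε(T) is irreducible; equivalently, the graph on the vertex set of T in which u and w are adjacent exactly when ε(T)_{uw} ≠ 0 is connected. -/
open Matrix

namespace TreeEcc

open SimpleGraph Walk

variable {V : Type*} [DecidableEq V] {G : SimpleGraph V}

/-- In a tree, every path has length equal to the distance between its endpoints. -/
lemma path_length_eq_dist (hT : G.IsTree) {x y : V} (p : G.Walk x y) (hp : p.IsPath) :
    p.length = G.dist x y := by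
  obtain ⟨q, hq⟩ := hT.isConnected.exists_walk_length_eq_dist x y
  have hb : q.bypass.IsPath := q.bypass_isPath
  have huniq := hT.existsUnique_path x y
  have : p = q.bypass := ((huniq.unique hp hb))
  have h1 : p.length ≤ q.length := by
    rw [this]; exact q.length_bypass_le
  have h2 : G.dist x y ≤ p.length := SimpleGraph.dist_le p
  omega

/-- Splitting a path at a support vertex splits the distance. -/
lemma split_at (hT : G.IsTree) {x y : V} (p : G.Walk x y) (hp : p.IsPath) {m : V}
    (hm : m ∈ p.support) : G.dist x m + G.dist m y = G.dist x y := by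
  have h1 := path_length_eq_dist hT _ (hp.takeUntil hm)
  have h2 := path_length_eq_dist hT _ (hp.dropUntil hm)
  have h3 := path_length_eq_dist hT p hp
  have h4 := congrArg Walk.length (p.take_spec hm)
  rw [Walk.length_append] at h4
  omega

lemma isPath_append_of {z m y : V} {r1 : G.Walk z m} {q : G.Walk m y}
    (h1 : r1.IsPath) (h2 : q.IsPath)
    (hint : ∀ t ∈ r1.support, t ∈ q.support → t = m) : (r1.append q).IsPath := by
  rw [Walk.isPath_def, Walk.support_append]
  refine List.Nodup.append h1.support_nodup ?_ ?_
  · have := h2.support_nodup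
    rw [q.support_eq_cons] at this
    exact (List.nodup_cons.mp this).2
  · intro t ht ht'
    have htq : t ∈ q.support := by
      rw [q.support_eq_cons]; exact List.mem_cons_of_mem _ ht'
    have : t = m := hint t ht htq
    subst this
    have := h2.support_nodup
    rw [q.support_eq_cons] at this
    exact (List.nodup_cons.mp this).1 ht'

/-- First meeting point of a walk with a list of vertices. -/
lemma exists_meet_list (L : List V) :
    ∀ {z x : V} (r : G.Walk z x), r.IsPath → x ∈ L →
    ∃ m, m ∈ L ∧ ∃ r1 : G.Walk z m, r1.IsPath ∧ r1.support ⊆ r.support ∧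
      ∀ t ∈ r1.support, t ∈ L → t = m := by
  intro z x r
  induction r with
  | nil =>
    intro _ hz
    exact ⟨_, hz, Walk.nil, Walk.IsPath.nil, by simp, by simp⟩
  | @cons z z' x h r' ih =>
    intro hr hx
    by_cases hz : z ∈ L
    · exact ⟨z, hz, Walk.nil, Walk.IsPath.nil, by simp, by simp⟩
    · obtain ⟨hr', hznot⟩ := (Walk.cons_isPath_iff h r').mp hr
      obtain ⟨m, hm, r1', hp1, hsub, hmeet⟩ := ih hr' hx
      refine ⟨m, hm, Walk.cons h r1', ?_, ?_, ?_⟩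
      · exact (Walk.cons_isPath_iff h r1').mpr ⟨hp1, fun hc => hznot (hsub hc)⟩
      · rw [Walk.support_cons, Walk.support_cons]
        exact List.cons_subset_cons z hsub
      · intro t ht htp
        rw [Walk.support_cons, List.mem_cons] at ht
        rcases ht with rfl | ht
        · exact absurd htp hz
        · exact hmeet t ht htp

/-- First meeting point of a path with another path's support. -/
lemma exists_meet {x y : V} (p : G.Walk x y) {z : V} (r : G.Walk z x) (hr : r.IsPath) :
    ∃ m, m ∈ p.support ∧ ∃ r1 : G.Walk z m, r1.IsPath ∧ r1.support ⊆ r.support ∧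
      ∀ t ∈ r1.support, t ∈ p.support → t = m :=
  exists_meet_list p.support r hr p.start_mem_support

/-- Median: for a path `p : a → b` and any vertex `u`, there is a vertex `m` on `p`
through which the distances from `u` to both endpoints split. -/
lemma exists_median (hT : G.IsTree) {a b : V} (p : G.Walk a b) (hp : p.IsPath) (u : V) :
    ∃ m, m ∈ p.support ∧ G.dist a m + G.dist m u = G.dist a u ∧
      G.dist b m + G.dist m u = G.dist b u := by
  obtain ⟨q, hq⟩ := hT.isConnected.exists_walk_length_eq_dist u a
  obtain ⟨m, hm, r1, hr1, _, hmeet⟩ := exists_meet p q.bypass q.bypass_isPath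
  have hr1len : r1.length = G.dist u m := path_length_eq_dist hT r1 hr1
  have hp1 : (p.takeUntil m hm).IsPath := hp.takeUntil hm
  have hp2 : (p.dropUntil m hm).IsPath := hp.dropUntil hm
  have hl1 : (p.takeUntil m hm).length = G.dist a m := path_length_eq_dist hT _ hp1
  have hl2 : (p.dropUntil m hm).length = G.dist m b := path_length_eq_dist hT _ hp2
  have hsub1 := p.support_takeUntil_subset hm
  have hsub2 := p.support_dropUntil_subset hm
  constructor
  case w => exact m
  refine ⟨hm, ?_, ?_⟩
  · -- via r1.append (takeUntil).reverse : u → a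
    have hpath : (r1.append (p.takeUntil m hm).reverse).IsPath := by
      apply isPath_append_of hr1 hp1.reverse
      intro t ht ht'
      rw [Walk.support_reverse, List.mem_reverse] at ht'
      exact hmeet t ht (hsub1 ht')
    have := path_length_eq_dist hT _ hpath
    rw [Walk.length_append, Walk.length_reverse, hr1len, hl1] at this
    have c1 : G.dist u m = G.dist m u := SimpleGraph.dist_comm
    have c2 : G.dist u a = G.dist a u := SimpleGraph.dist_comm
    omega
  · have hpath : (r1.append (p.dropUntil m hm)).IsPath := by
      apply isPath_append_of hr1 hp2
      intro t ht ht'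
      exact hmeet t ht (hsub2 ht')
    have := path_length_eq_dist hT _ hpath
    rw [Walk.length_append, hr1len, hl2] at this
    have c1 : G.dist u m = G.dist m u := SimpleGraph.dist_comm
    have c2 : G.dist u b = G.dist b u := SimpleGraph.dist_comm
    have c3 : G.dist m b = G.dist b m := SimpleGraph.dist_comm
    omega

/-- Two points on a path are linearly ordered along it. -/
lemma between (hT : G.IsTree) {a b : V} (p : G.Walk a b) (hp : p.IsPath) {m m' : V}
    (hm : m ∈ p.support) (hm' : m' ∈ p.support) :
    G.dist a m + G.dist m m' + G.dist m' b = G.dist a b ∨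
    G.dist a m' + G.dist m' m + G.dist m b = G.dist a b := by
  have hsplit := split_at hT p hp hm
  have hm'' : m' ∈ (p.takeUntil m hm).support ∨ m' ∈ (p.dropUntil m hm).support := by
    rw [← Walk.mem_support_append_iff, p.take_spec hm]; exact hm'
  rcases hm'' with h | h
  · right
    have := split_at hT _ (hp.takeUntil hm) h
    have h1 := path_length_eq_dist hT _ (hp.takeUntil hm)
    omega
  · left
    have := split_at hT _ (hp.dropUntil hm) h
    have h2 := path_length_eq_dist hT _ (hp.dropUntil hm)
    omega

/-- The key tree lemma. -/
lemma key (hT : G.IsTree) (a b u w : V) (ha : G.dist u a ≤ G.dist u w)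
    (hb : G.dist u b ≤ G.dist u w) :
    G.dist a b ≤ G.dist a w ∨ G.dist a b ≤ G.dist b w := by
  obtain ⟨q, hq⟩ := hT.isConnected.exists_walk_length_eq_dist a b
  set p := q.bypass with hpdef
  have hp : p.IsPath := q.bypass_isPath
  obtain ⟨m, hm, hmu1, hmu2⟩ := exists_median hT p hp u
  obtain ⟨m', hm', hmw1, hmw2⟩ := exists_median hT p hp w
  have hsm := split_at hT p hp hm
  have hsm' := split_at hT p hp hm'
  have t1 : G.dist u w ≤ G.dist u m + G.dist m w := hT.isConnected.dist_triangle
  have t2 : G.dist m w ≤ G.dist m m' + G.dist m' w := hT.isConnected.dist_triangle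
  have c1 : G.dist u a = G.dist a u := SimpleGraph.dist_comm
  have c2 : G.dist u b = G.dist b u := SimpleGraph.dist_comm
  have c3 : G.dist u m = G.dist m u := SimpleGraph.dist_comm
  have c4 : G.dist m m' = G.dist m' m := SimpleGraph.dist_comm
  have c5 : G.dist b m = G.dist m b := SimpleGraph.dist_comm
  have c6 : G.dist b m' = G.dist m' b := SimpleGraph.dist_comm
  rcases between hT p hp hm hm' with hcase | hcase
  · left; omega
  · right; omega

end TreeEcc

/-- The eccentricity matrix of a tree (on at least two vertices) is irreducible:
the graph whose edges are the nonzero entries of `ε(T)` is connected. -/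
theorem eccMatrix_irreducible_of_tree {V : Type*} [Fintype V] [DecidableEq V]
    (G : SimpleGraph V) (hT : G.IsTree) (hn : 2 ≤ Fintype.card V) :
    (SimpleGraph.fromRel fun u w => G.eccMatrix u w ≠ 0).Connected := by
  classical
  have hconn := hT.isConnected
  have hne : Nonempty V := Fintype.card_pos_iff.mp (by omega)
  haveI := hne
  have hecc_le : ∀ v x : V, G.dist v x ≤ G.ecc v := fun v x =>
    Finset.le_sup (Finset.mem_univ x)
  have heccpos : ∀ v : V, 0 < G.ecc v := by
    intro v
    obtain ⟨u, hu⟩ := Fintype.exists_ne_of_one_lt_card (by omega) v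
    exact lt_of_lt_of_le (hconn.pos_dist_of_ne (Ne.symm hu)) (hecc_le v u)
  set H := (SimpleGraph.fromRel fun u w => G.eccMatrix u w ≠ 0) with hH
  have hadj : ∀ u w : V, G.dist u w = G.ecc u → H.Adj u w := by
    intro u w h
    have hpos : 0 < G.dist u w := h ▸ heccpos u
    have hne' : u ≠ w := (SimpleGraph.dist_ne_zero_iff_ne_and_reachable.mp hpos.ne').1
    have hw : G.ecc u ≤ G.ecc w := by
      calc G.ecc u = G.dist w u := by rw [← h, SimpleGraph.dist_comm]
      _ ≤ G.ecc w := hecc_le w u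
    have hcond : G.dist u w = min (G.ecc u) (G.ecc w) := by
      rw [h]; exact (min_eq_left hw).symm
    have hnz : G.eccMatrix u w ≠ 0 := by
      have : G.eccMatrix u w = (G.dist u w : ℝ) := by
        simp only [SimpleGraph.eccMatrix, Matrix.of_apply, if_pos hcond]
      rw [this]
      exact Nat.cast_ne_zero.mpr hpos.ne'
    exact (SimpleGraph.fromRel_adj _ u w).mpr ⟨hne', Or.inl hnz⟩
  obtain ⟨⟨a, b⟩, -, hab⟩ := Finset.exists_mem_eq_sup (Finset.univ : Finset (V × V))
    Finset.univ_nonempty (fun pr => G.dist pr.1 pr.2)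
  have hmax : ∀ x y : V, G.dist x y ≤ G.dist a b := by
    intro x y
    have := Finset.le_sup (f := fun pr : V × V => G.dist pr.1 pr.2) (Finset.mem_univ (x, y))
    rw [hab] at this
    exact this
  have hecc_le_D : ∀ v : V, G.ecc v ≤ G.dist a b := fun v =>
    Finset.sup_le fun x _ => hmax v x
  have hreach : ∀ u : V, H.Reachable u a := by
    intro u
    obtain ⟨w, -, hw⟩ := Finset.exists_mem_eq_sup (Finset.univ : Finset V)
      Finset.univ_nonempty (G.dist u)
    have hw' : G.ecc u = G.dist u w := hw
    have h1 : H.Adj u w := hadj u w hw'.symm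
    have ha' : G.dist u a ≤ G.dist u w := hw' ▸ hecc_le u a
    have hb' : G.dist u b ≤ G.dist u w := hw' ▸ hecc_le u b
    rcases TreeEcc.key hT a b u w ha' hb' with hcs | hcs
    · have heq : G.dist w a = G.ecc w := by
        have h2 : G.dist a w = G.dist a b := le_antisymm (hmax a w) hcs
        have h3 : G.ecc w ≤ G.dist w a := by
          rw [SimpleGraph.dist_comm, h2]; exact hecc_le_D w
        exact le_antisymm (hecc_le w a) h3
      exact h1.reachable.trans (hadj w a heq).reachable
    · have heq : G.dist w b = G.ecc w := by
        have h2 : G.dist b w = G.dist a b := le_antisymm (hmax b w) hcs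
        have h3 : G.ecc w ≤ G.dist w b := by
          rw [SimpleGraph.dist_comm, h2]; exact hecc_le_D w
        exact le_antisymm (hecc_le w b) h3
      have heqba : G.dist b a = G.ecc b := by
        have h3 : G.ecc b ≤ G.dist b a := by
          rw [SimpleGraph.dist_comm]; exact hecc_le_D b
        exact le_antisymm (hecc_le b a) h3
      exact h1.reachable.trans ((hadj w b heq).reachable.trans (hadj b a heqba).reachable)
  have hpre : H.Preconnected := fun u v => (hreach u).trans (hreach v).symm
  exact SimpleGraph.Connected.mk hpre
end

section
/- Let T be a tree, let P(v₁, v_n) be a path of maximum length in T, and let v_j be any vertex of T. Then either d(v₁, v_j) = min{e(v₁), e(v_j)} or d(v_n, v_j) = min{e(v_n), e(v_j)}; i.e., every vertex attains an eccentricity-matrix nonzero entry with at least one endpoint of a longest path. -/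
open Matrix

namespace SimpleGraph

variable {V : Type*} {G : SimpleGraph V}

private lemma aux_dist_eq_length [DecidableEq V] (hT : G.IsTree) {a b : V} (w : G.Walk a b) (hw : w.IsPath) :
    G.dist a b = w.length := by
  refine le_antisymm (dist_le w) ?_
  obtain ⟨s, hs⟩ := hT.isConnected.exists_walk_length_eq_dist a b
  obtain ⟨r, -, hun⟩ := hT.existsUnique_path a b
  calc w.length = s.bypass.length := by rw [hun w hw, ← hun s.bypass s.bypass_isPath]
    _ ≤ s.length := s.length_bypass_le
    _ = G.dist a b := hs

private lemma aux_between [DecidableEq V] (hT : G.IsTree) {a b c : V} (w : G.Walk a b) (hw : w.IsPath)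
    (hc : c ∈ w.support) : G.dist a c + G.dist c b = G.dist a b := by
  have h1 := aux_dist_eq_length hT _ (hw.takeUntil hc)
  have h2 := aux_dist_eq_length hT _ (hw.dropUntil hc)
  have h3 := aux_dist_eq_length hT w hw
  rw [h1, h2, h3, ← Walk.length_append, Walk.take_spec]

private lemma aux_isPath_append {a b c : V} {w : G.Walk a b} {q : G.Walk b c}
    (hw : w.IsPath) (hq : q.IsPath) (h : ∀ x ∈ w.support, x ∈ q.support → x = b) :
    (w.append q).IsPath := by
  rw [Walk.isPath_def, Walk.support_append]
  have hqs := hq.support_nodup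
  rw [q.support_eq_cons, List.nodup_cons] at hqs
  refine hw.support_nodup.append hqs.2 ?_
  intro x hx hx'
  have hxq : x ∈ q.support := by
    rw [q.support_eq_cons]; exact List.mem_cons_of_mem _ hx'
  have hxb := h x hx hxq
  subst hxb
  exact hqs.1 hx'

private lemma aux_first {s t : V} (P : G.Walk s t) :
    ∀ {x y : V} (w : G.Walk x y), w.IsPath → y ∈ P.support →
      ∃ (m : V) (q : G.Walk x m), q.IsPath ∧ (∀ z ∈ q.support, z ∈ w.support) ∧
        m ∈ P.support ∧ ∀ z ∈ q.support, z ∈ P.support → z = m := by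
  intro x y w
  induction w with
  | nil =>
    intro _ hy
    exact ⟨_, Walk.nil, Walk.IsPath.nil, by simp, hy, by simp⟩
  | @cons a b c h w' ih =>
    intro hw hy
    by_cases hx : a ∈ P.support
    · exact ⟨a, Walk.nil, Walk.IsPath.nil, by simp, hx, by simp⟩
    · obtain ⟨m, q, hq, hsub, hm, hmeet⟩ := ih hw.of_cons hy
      refine ⟨m, Walk.cons h q, ?_, ?_, hm, ?_⟩
      · rw [Walk.cons_isPath_iff]
        exact ⟨hq, fun hc => ((Walk.cons_isPath_iff _ _).mp hw).2 (hsub a hc)⟩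
      · intro z hz
        rw [Walk.support_cons, List.mem_cons] at hz ⊢
        exact hz.imp id fun hz' => hsub z hz'
      · intro z hz hzP
        rw [Walk.support_cons, List.mem_cons] at hz
        rcases hz with rfl | hz
        · exact absurd hzP hx
        · exact hmeet z hz hzP

private lemma aux_proj [DecidableEq V] (hT : G.IsTree) {s t : V} (P : G.Walk s t) (hP : P.IsPath) (x : V) :
    ∃ m, m ∈ P.support ∧ G.dist x s = G.dist x m + G.dist m s ∧
      G.dist x t = G.dist x m + G.dist m t := by
  obtain ⟨w, hw, -⟩ := hT.existsUnique_path x s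
  obtain ⟨m, q, hq, -, hm, hmeet⟩ := aux_first P w hw P.start_mem_support
  have htk : (P.takeUntil m hm).IsPath := hP.takeUntil hm
  have hdp : (P.dropUntil m hm).IsPath := hP.dropUntil hm
  have h1 : (q.append (P.takeUntil m hm).reverse).IsPath := by
    refine aux_isPath_append hq htk.reverse ?_
    intro y hy hy'
    refine hmeet y hy (P.support_takeUntil_subset hm ?_)
    rwa [Walk.support_reverse, List.mem_reverse] at hy'
  have h2 : (q.append (P.dropUntil m hm)).IsPath := by
    refine aux_isPath_append hq hdp ?_
    intro y hy hy'
    exact hmeet y hy (P.support_dropUntil_subset hm hy')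
  have e1 := aux_dist_eq_length hT _ h1
  rw [Walk.length_append, Walk.length_reverse] at e1
  have e2 := aux_dist_eq_length hT _ h2
  rw [Walk.length_append] at e2
  have e3 := aux_dist_eq_length hT q hq
  have e4 := aux_dist_eq_length hT _ htk.reverse
  rw [Walk.length_reverse] at e4
  have e5 := aux_dist_eq_length hT _ hdp
  exact ⟨m, hm, by omega, by omega⟩

private lemma aux_order [DecidableEq V] (hT : G.IsTree) {s t : V} (P : G.Walk s t) (hP : P.IsPath) {a b : V}
    (ha : a ∈ P.support) (hb : b ∈ P.support) (hab : G.dist s a ≤ G.dist s b) :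
    G.dist s a + G.dist a b = G.dist s b := by
  have hsplit : a ∈ (P.takeUntil b hb).support ∨ a ∈ (P.dropUntil b hb).support := by
    rw [← Walk.mem_support_append_iff, Walk.take_spec]; exact ha
  rcases hsplit with h | h
  · exact aux_between hT _ (hP.takeUntil hb) h
  · have h1 := aux_between hT _ (hP.dropUntil hb) h
    have h2 := aux_between hT P hP ha
    have h3 := aux_between hT P hP hb
    have hba : G.dist b a = 0 := by omega
    have hba' : b = a := hT.isConnected.dist_eq_zero_iff.mp hba
    subst hba'
    have : G.dist b b = 0 := G.dist_self
    omega

private lemma aux_key [DecidableEq V] (hT : G.IsTree) {v₁ vₙ : V} (p : G.Walk v₁ vₙ) (hp : p.IsPath)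
    (hbound : ∀ a b : V, G.dist a b ≤ G.dist v₁ vₙ) (vj u : V) :
    G.dist vj u ≤ max (G.dist vj v₁) (G.dist vj vₙ) := by
  obtain ⟨m, hm, hm1, hm2⟩ := aux_proj hT p hp vj
  obtain ⟨m', hm', hn1, hn2⟩ := aux_proj hT p hp u
  have hmm : G.dist v₁ m + G.dist m vₙ = G.dist v₁ vₙ := aux_between hT p hp hm
  have hmm' : G.dist v₁ m' + G.dist m' vₙ = G.dist v₁ vₙ := aux_between hT p hp hm'
  have t1 : G.dist vj u ≤ G.dist vj m + G.dist m u := hT.isConnected.dist_triangle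
  have t2 : G.dist m u ≤ G.dist m m' + G.dist m' u := hT.isConnected.dist_triangle
  have cm1 : G.dist m v₁ = G.dist v₁ m := dist_comm
  have cm2 : G.dist m' v₁ = G.dist v₁ m' := dist_comm
  have cm3 : G.dist u m' = G.dist m' u := dist_comm
  rcases le_total (G.dist v₁ m) (G.dist v₁ m') with hcase | hcase
  · have hord := aux_order hT p hp hm hm' hcase
    have hu1 := hbound u v₁
    have : G.dist vj u ≤ G.dist vj vₙ := by omega
    exact le_trans this (le_max_right _ _)
  · have hord := aux_order hT p hp hm' hm hcase
    have hu2 := hbound u vₙ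
    have cm5 : G.dist m' m = G.dist m m' := dist_comm
    have : G.dist vj u ≤ G.dist vj v₁ := by omega
    exact le_trans this (le_max_left _ _)

end SimpleGraph

/-- In a tree, if `P(v₁, vₙ)` is a longest path, then every vertex `v_j` satisfies
`d(v₁,v_j) = min{e(v₁),e(v_j)}` or `d(vₙ,v_j) = min{e(vₙ),e(v_j)}`; i.e., every vertex
attains a nonzero eccentricity-matrix entry with an endpoint of a longest path. -/
theorem longest_path_endpoint_attains {V : Type*} [Fintype V]
    (G : SimpleGraph V) (hT : G.IsTree) (v₁ vₙ : V)
    (p : G.Walk v₁ vₙ) (hp : p.IsPath)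
    (hmax : ∀ (a b : V) (q : G.Walk a b), q.IsPath → q.length ≤ p.length)
    (vj : V) :
    G.dist v₁ vj = min (G.ecc v₁) (G.ecc vj) ∨
      G.dist vₙ vj = min (G.ecc vₙ) (G.ecc vj) := by
  classical
  have hD : G.dist v₁ vₙ = p.length := SimpleGraph.aux_dist_eq_length hT p hp
  have hbound : ∀ a b : V, G.dist a b ≤ G.dist v₁ vₙ := by
    intro a b
    obtain ⟨w, hw, -⟩ := hT.existsUnique_path a b
    rw [SimpleGraph.aux_dist_eq_length hT w hw, hD]
    exact hmax a b w hw
  have key : ∀ u, G.dist vj u ≤ max (G.dist vj v₁) (G.dist vj vₙ) :=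
    SimpleGraph.aux_key hT p hp hbound vj
  have he1 : G.ecc vj ≤ max (G.dist vj v₁) (G.dist vj vₙ) :=
    Finset.sup_le fun u _ => key u
  rcases le_total (G.dist vj vₙ) (G.dist vj v₁) with h | h
  · left
    have heccj : G.ecc vj = G.dist vj v₁ := by
      refine le_antisymm (by simpa [max_eq_left h] using he1) ?_
      exact Finset.le_sup (f := G.dist vj) (Finset.mem_univ v₁)
    have hecc1 : G.dist vj v₁ ≤ G.ecc v₁ := by
      have h1 : G.dist v₁ vₙ ≤ G.ecc v₁ :=
        Finset.le_sup (f := G.dist v₁) (Finset.mem_univ vₙ)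
      have h2 := hbound v₁ vj
      have h3 : G.dist vj v₁ = G.dist v₁ vj := SimpleGraph.dist_comm
      omega
    have hmin : min (G.ecc v₁) (G.ecc vj) = G.ecc vj :=
      min_eq_right (heccj ▸ hecc1)
    rw [hmin, heccj, SimpleGraph.dist_comm]
  · right
    have heccj : G.ecc vj = G.dist vj vₙ := by
      refine le_antisymm (by simpa [max_eq_right h] using he1) ?_
      exact Finset.le_sup (f := G.dist vj) (Finset.mem_univ vₙ)
    have heccn : G.dist vj vₙ ≤ G.ecc vₙ := by
      have h1 : G.dist vₙ v₁ ≤ G.ecc vₙ :=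
        Finset.le_sup (f := G.dist vₙ) (Finset.mem_univ v₁)
      have h2 := hbound vₙ vj
      have h3 : G.dist vj vₙ = G.dist vₙ vj := SimpleGraph.dist_comm
      have h4 : G.dist vₙ v₁ = G.dist v₁ vₙ := SimpleGraph.dist_comm
      omega
    have hmin : min (G.ecc vₙ) (G.ecc vj) = G.ecc vj :=
      min_eq_right (heccj ▸ heccn)
    rw [hmin, heccj, SimpleGraph.dist_comm]
end

section
/- Let G be an r-regular graph with diameter 2 on n vertices whose adjacency matrix has eigenvalues r, λ₂, …, λ_n. Then the eccentricity matrix of G ∨ K₁ is [[2A(Ḡ), J_{n×1}],[J_{1×n}, 0]], and its spectrum is {(n−r−1) ± √((n−r−1)² + n) each with multiplicity 1} ∪ {−2(λ_i + 1) : i = 2, …, n}. -/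
open Matrix

open Polynomial

/-- The join `G ∨ K₁`: a new vertex adjacent to every vertex of `G`. -/
def joinK1 {V : Type*} (G : SimpleGraph V) : SimpleGraph (V ⊕ Unit) :=
  SimpleGraph.fromRel fun x y =>
    (∃ u v, x = Sum.inl u ∧ y = Sum.inl v ∧ G.Adj u v) ∨
    (∃ u, x = Sum.inl u ∧ y = Sum.inr ())

set_option linter.unusedSectionVars false
set_option maxHeartbeats 1000000

section Aux

variable {V : Type*} [Fintype V] [DecidableEq V] (G : SimpleGraph V) [DecidableRel G.Adj]

lemma jadj_ll {u v : V} : (joinK1 G).Adj (Sum.inl u) (Sum.inl v) ↔ G.Adj u v := by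
  simp only [joinK1, SimpleGraph.fromRel_adj, ne_eq, Sum.inl.injEq]
  constructor
  · rintro ⟨hne, h⟩
    rcases h with (⟨a,b,ha,hb,hab⟩|⟨a,ha,hb⟩)|(⟨a,b,ha,hb,hab⟩|⟨a,ha,hb⟩) <;>
      simp_all [Sum.inl.injEq]
    exact hab.symm
  · intro h
    exact ⟨h.ne, Or.inl (Or.inl ⟨u, v, rfl, rfl, h⟩)⟩

lemma jadj_lr {u : V} : (joinK1 G).Adj (Sum.inl u) (Sum.inr ()) :=
  ⟨by simp, Or.inl (Or.inr ⟨u, rfl, rfl⟩)⟩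

lemma jdist_lr (u : V) : (joinK1 G).dist (Sum.inl u) (Sum.inr ()) = 1 :=
  SimpleGraph.dist_eq_one_iff_adj.mpr (jadj_lr G)

lemma jdist_rl (u : V) : (joinK1 G).dist (Sum.inr ()) (Sum.inl u) = 1 :=
  SimpleGraph.dist_eq_one_iff_adj.mpr (jadj_lr G).symm

lemma jdist_ll (u v : V) :
    (joinK1 G).dist (Sum.inl u) (Sum.inl v)
      = if u = v then 0 else if G.Adj u v then 1 else 2 := by
  rcases eq_or_ne u v with rfl | hne
  · simp [SimpleGraph.dist_self]
  by_cases hadj : G.Adj u v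
  · simp [hne, hadj, SimpleGraph.dist_eq_one_iff_adj.mpr ((jadj_ll G).mpr hadj)]
  simp only [hne, hadj, if_false, if_neg]
  let w : (joinK1 G).Walk (Sum.inl u) (Sum.inl v) :=
    SimpleGraph.Walk.cons (jadj_lr G) (SimpleGraph.Walk.cons (jadj_lr G).symm SimpleGraph.Walk.nil)
  have hle : (joinK1 G).dist (Sum.inl u) (Sum.inl v) ≤ 2 := SimpleGraph.dist_le w
  have h0 : (joinK1 G).dist (Sum.inl u) (Sum.inl v) ≠ 0 := by
    intro h
    rcases SimpleGraph.dist_eq_zero_iff_eq_or_not_reachable.mp h with h' | h'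
    · exact hne (by simpa using h')
    · exact h' ⟨w⟩
  have h1 : (joinK1 G).dist (Sum.inl u) (Sum.inl v) ≠ 1 := by
    intro h
    exact hadj ((jadj_ll G).mp (SimpleGraph.dist_eq_one_iff_adj.mp h))
  omega

lemma jecc_r [Nonempty V] : (joinK1 G).ecc (Sum.inr ()) = 1 := by
  apply le_antisymm
  · apply Finset.sup_le
    rintro (v | ⟨⟩) _
    · exact le_of_eq (jdist_rl G v)
    · simp [SimpleGraph.dist_self]
  · obtain ⟨v⟩ := ‹Nonempty V›
    exact le_trans (le_of_eq (jdist_rl G v).symm) (Finset.le_sup (Finset.mem_univ (Sum.inl v)))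

lemma jecc_l {u w : V} (hw : w ≠ u) (hnadj : ¬ G.Adj u w) : (joinK1 G).ecc (Sum.inl u) = 2 := by
  apply le_antisymm
  · apply Finset.sup_le
    rintro (v | ⟨⟩) _
    · rw [jdist_ll]; split <;> [omega; (split <;> omega)]
    · rw [jdist_lr]; omega
  · have : (joinK1 G).dist (Sum.inl u) (Sum.inl w) = 2 := by
      rw [jdist_ll]; simp [Ne.symm hw, hnadj]
    exact le_trans (le_of_eq this.symm) (Finset.le_sup (Finset.mem_univ (Sum.inl w)))

lemma exists_nonadj {r : ℕ} (hreg : G.IsRegularOfDegree r) (hd : ∃ u v : V, G.dist u v = 2)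
    (u : V) : ∃ w, w ≠ u ∧ ¬ G.Adj u w := by
  obtain ⟨a, b, hab⟩ := hd
  have hne : a ≠ b := by intro h; rw [h, SimpleGraph.dist_self] at hab; omega
  have hnadj : ¬ G.Adj a b := fun h => by
    rw [SimpleGraph.dist_eq_one_iff_adj.mpr h] at hab; omega
  by_contra hcon
  push_neg at hcon
  have h1 : Finset.univ.erase u ⊆ G.neighborFinset u := by
    intro w hw
    simp only [Finset.mem_erase] at hw
    simpa using hcon w hw.1
  have h2 : G.neighborFinset a ⊆ (Finset.univ.erase a).erase b := by
    intro w hw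
    simp only [SimpleGraph.mem_neighborFinset] at hw
    simp only [Finset.mem_erase, Finset.mem_univ, and_true]
    exact ⟨fun h => hnadj (h ▸ hw), fun h => G.irrefl (h ▸ hw)⟩
  have c1 := Finset.card_le_card h1
  have c2 := Finset.card_le_card h2
  rw [Finset.card_erase_of_mem (Finset.mem_univ u)] at c1
  rw [Finset.card_erase_of_mem (Finset.mem_erase.mpr ⟨Ne.symm hne, Finset.mem_univ b⟩),
    Finset.card_erase_of_mem (Finset.mem_univ a)] at c2
  rw [SimpleGraph.card_neighborFinset_eq_degree, hreg u] at c1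
  rw [SimpleGraph.card_neighborFinset_eq_degree, hreg a] at c2
  have hcard : 2 ≤ Fintype.card V := Fintype.one_lt_card_iff_nontrivial.mpr ⟨⟨a, b, hne⟩⟩
  simp only [Finset.card_univ] at c1 c2
  omega

lemma ecc_block {r : ℕ} (hreg : G.IsRegularOfDegree r) (hd : ∃ u v : V, G.dist u v = 2) :
    (joinK1 G).eccMatrix =
      Matrix.fromBlocks (2 • Gᶜ.adjMatrix ℝ) (Matrix.of fun _ _ => 1)
        (Matrix.of fun _ _ => 1) 0 := by
  obtain ⟨a, b, hab⟩ := hd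
  have : Nonempty V := ⟨a⟩
  have eccl : ∀ u : V, (joinK1 G).ecc (Sum.inl u) = 2 := fun u => by
    obtain ⟨w, hw, hnadj⟩ := exists_nonadj G hreg ⟨a, b, hab⟩ u
    exact jecc_l G hw hnadj
  ext i j
  cases i with
  | inl u =>
    cases j with
    | inl v =>
      simp only [SimpleGraph.eccMatrix, Matrix.of_apply, Matrix.fromBlocks_apply₁₁,
        Matrix.smul_apply, SimpleGraph.adjMatrix_apply, SimpleGraph.compl_adj]
      rw [jdist_ll, eccl, eccl]
      rcases eq_or_ne u v with rfl | huv
      · simp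
      by_cases hadj : G.Adj u v
      · simp [huv, hadj]
      · simp [huv, hadj]
    | inr t =>
      cases t
      simp only [SimpleGraph.eccMatrix, Matrix.of_apply, Matrix.fromBlocks_apply₁₂]
      rw [jdist_lr, eccl, jecc_r]
      simp
  | inr t =>
    cases t
    cases j with
    | inl v =>
      simp only [SimpleGraph.eccMatrix, Matrix.of_apply, Matrix.fromBlocks_apply₂₁]
      rw [jdist_rl, jecc_r, eccl]
      simp
    | inr t' =>
      cases t'
      simp only [SimpleGraph.eccMatrix, Matrix.of_apply, Matrix.fromBlocks_apply₂₂]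
      rw [SimpleGraph.dist_self, jecc_r]
      simp

lemma eval_charpoly' {W : Type*} [Fintype W] [DecidableEq W] (M : Matrix W W ℝ) (x : ℝ) :
    M.charpoly.eval x = (x • (1 : Matrix W W ℝ) - M).det := by
  rw [Matrix.charpoly, ← Polynomial.coe_evalRingHom, RingHom.map_det]
  congr 1
  ext i j
  by_cases h : i = j
  · subst h
    simp [Matrix.charmatrix_apply_eq, Matrix.one_apply_eq]
  · simp [Matrix.charmatrix_apply_ne _ _ _ h, Matrix.one_apply_ne h]

lemma eval_prod_linear (s : Multiset ℝ) (x : ℝ) :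
    ((s.map fun a => X - C a).prod).eval x = (s.map fun a => x - a).prod := by
  rw [Polynomial.eval_multiset_prod, Multiset.map_map]
  congr 1
  ext a
  simp

lemma det_shift {W : Type*} [Fintype W] [DecidableEq W] (M : Matrix W W ℝ) (R : Multiset ℝ)
    (hcard : R.card = Fintype.card W)
    (hfact : M.charpoly = (R.map fun a => X - C a).prod) (x : ℝ) :
    ((x + 2) • (1 : Matrix W W ℝ) + 2 • M).det = (R.map fun t => x + 2 + 2 * t).prod := by
  have h1 : (x + 2) • (1 : Matrix W W ℝ) + 2 • M
      = (-2 : ℝ) • ((-(x + 2) / 2) • (1 : Matrix W W ℝ) - M) := by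
    rw [smul_sub, smul_smul]
    ring_nf
    module
  rw [h1, Matrix.det_smul, ← eval_charpoly', hfact, eval_prod_linear, ← hcard]
  have hr : (fun t : ℝ => x + 2 + 2 * t) = fun t : ℝ => (-2) * (-(x + 2) / 2 - t) :=
    funext fun t => by ring
  rw [hr, Multiset.prod_map_mul, Multiset.map_const', Multiset.prod_replicate]

lemma det_block {r : ℕ} (hreg : G.IsRegularOfDegree r) (x : ℝ) (hx : x ≠ 0)
    (hxr : x + 2 + 2 * r ≠ 0)
    (hdetB : ((x + 2) • (1 : Matrix V V ℝ) + 2 • G.adjMatrix ℝ).det ≠ 0) :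
    (x • (1 : Matrix (V ⊕ Unit) (V ⊕ Unit) ℝ) -
        fromBlocks (2 • Gᶜ.adjMatrix ℝ) (Matrix.of fun _ _ => 1) (Matrix.of fun _ _ => 1) 0).det
      = x * ((x + 2) • (1 : Matrix V V ℝ) + 2 • G.adjMatrix ℝ).det *
          (1 - (2 + x⁻¹) * (x + 2 + 2 * r)⁻¹ * (Fintype.card V)) := by
  set B' : Matrix V V ℝ := (x + 2) • 1 + 2 • G.adjMatrix ℝ with hB'
  set Dm : Matrix Unit Unit ℝ := Matrix.of fun _ _ => x with hDm
  have hA : x • (1 : Matrix (V ⊕ Unit) (V ⊕ Unit) ℝ) -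
      fromBlocks (2 • Gᶜ.adjMatrix ℝ) (Matrix.of fun _ _ => 1) (Matrix.of fun _ _ => 1) 0
      = fromBlocks (x • 1 - 2 • Gᶜ.adjMatrix ℝ) (Matrix.of fun _ _ => (-1 : ℝ))
          (Matrix.of fun _ _ => (-1 : ℝ)) Dm := by
    ext (i | i) (j | j) <;>
      simp [Matrix.one_apply, Matrix.sub_apply, Matrix.smul_apply, hDm]
  haveI : Invertible Dm := Dm.invertibleOfIsUnitDet (by rw [Matrix.det_unique]; exact hx.isUnit)
  have hinvD : ⅟ Dm = x⁻¹ • (1 : Matrix Unit Unit ℝ) := by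
    apply invOf_eq_right_inv
    ext i j
    simp [hDm, Matrix.mul_apply, Matrix.one_apply, mul_inv_cancel₀ hx]
  have hBC : (Matrix.of fun _ _ => (-1 : ℝ) : Matrix V Unit ℝ) * ⅟ Dm *
      (Matrix.of fun _ _ => (-1 : ℝ) : Matrix Unit V ℝ) = Matrix.of fun _ _ => x⁻¹ := by
    rw [hinvD]
    ext u w
    simp [Matrix.mul_apply, Matrix.one_apply]
  rw [hA, Matrix.det_fromBlocks₂₂, hBC, Matrix.det_unique]
  have hcr : Matrix.replicateCol Unit (fun _ : V => -(2 + x⁻¹)) * Matrix.replicateRow Unit (fun _ : V => (1 : ℝ))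
      = Matrix.of fun (_ _ : V) => -(2 + x⁻¹) := by
    ext u w
    rw [Matrix.mul_apply]
    simp
  have hD : (x • 1 - 2 • Gᶜ.adjMatrix ℝ) - (Matrix.of fun _ _ => x⁻¹ : Matrix V V ℝ)
      = B' + Matrix.replicateCol Unit (fun _ : V => -(2 + x⁻¹)) * Matrix.replicateRow Unit (fun _ : V => (1 : ℝ)) := by
    rw [hcr]
    ext u w
    simp only [hB', Matrix.sub_apply, Matrix.add_apply, Matrix.smul_apply, Matrix.of_apply,
      Matrix.one_apply, SimpleGraph.adjMatrix_apply, SimpleGraph.compl_adj, smul_eq_mul, ne_eq]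
    by_cases h : u = w
    · subst h
      simp
      ring
    · by_cases hadj : G.Adj u w <;> simp [h, hadj] <;> ring
  rw [hD, Matrix.det_add_replicateCol_mul_replicateRow hdetB.isUnit]
  have hBones : B' *ᵥ (fun _ => (1 : ℝ)) = (x + 2 + 2 * r) • fun _ => (1 : ℝ) := by
    funext v
    simp only [hB', Matrix.add_mulVec, Matrix.smul_mulVec, Matrix.one_mulVec]
    have := G.adjMatrix_mulVec_const_apply_of_regular (α := ℝ) (a := (1 : ℝ)) hreg (v := v)
    simp only [Pi.add_apply, Pi.smul_apply, smul_eq_mul]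
    rw [show (fun (_ : V) => (1:ℝ)) = Function.const V (1:ℝ) from rfl, this]
    ring
  have hBinv : B'⁻¹ *ᵥ (fun _ => (1 : ℝ)) = (x + 2 + 2 * r)⁻¹ • fun _ => (1 : ℝ) := by
    have h1 : B' *ᵥ ((x + 2 + 2 * r)⁻¹ • fun _ => (1 : ℝ)) = fun _ => (1 : ℝ) := by
      rw [Matrix.mulVec_smul, hBones, smul_smul, inv_mul_cancel₀ hxr, one_smul]
    calc B'⁻¹ *ᵥ (fun _ => (1 : ℝ))
        = B'⁻¹ *ᵥ (B' *ᵥ ((x + 2 + 2 * r)⁻¹ • fun _ => (1 : ℝ))) := by rw [h1]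
      _ = (B'⁻¹ * B') *ᵥ ((x + 2 + 2 * r)⁻¹ • fun _ => (1 : ℝ)) := by
            rw [Matrix.mulVec_mulVec]
      _ = _ := by rw [Matrix.nonsing_inv_mul _ hdetB.isUnit, Matrix.one_mulVec]
  have hu : (fun _ => -(2 + x⁻¹) : V → ℝ) = (-(2 + x⁻¹)) • fun _ => (1 : ℝ) := by
    funext v; simp
  have hF : ((1 : Matrix Unit Unit ℝ) + Matrix.replicateRow Unit (fun _ : V => (1 : ℝ)) * B'⁻¹ *
      Matrix.replicateCol Unit (fun _ : V => -(2 + x⁻¹))).det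
      = 1 - (2 + x⁻¹) * (x + 2 + 2 * r)⁻¹ * (Fintype.card V) := by
    rw [Matrix.det_unique, Matrix.add_apply, Matrix.one_apply_eq, Matrix.mul_assoc,
      ← Matrix.replicateCol_mulVec, Matrix.replicateRow_mul_replicateCol_apply]
    rw [hu, Matrix.mulVec_smul, hBinv]
    simp [dotProduct, Finset.card_univ]
    ring
  rw [hF]
  simp only [hDm, Matrix.of_apply]
  ring

end Aux

/-- For an `r`-regular graph `G` with diameter `2` on `n` vertices with adjacency
eigenvalues `r, λ₂, …, λₙ`, the eccentricity matrix of `G ∨ K₁` is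
`[[2A(Ḡ), J],[J, 0]]`, and its spectrum is `(n-r-1) ± √((n-r-1)² + n)` together with
`-2(λᵢ + 1)` for `i = 2, …, n`. -/
theorem eccMatrix_join_K1 {V : Type*} [Fintype V] [DecidableEq V]
    (G : SimpleGraph V) [DecidableRel G.Adj] (r n : ℕ) (hn : n = Fintype.card V)
    (hreg : G.IsRegularOfDegree r) (hconn : G.Connected)
    (hdiam : (∀ u v : V, G.dist u v ≤ 2) ∧ ∃ u v : V, G.dist u v = 2)
    (lam : Fin (n - 1) → ℝ)
    (hspec : (G.adjMatrix ℝ).charpoly.roots = (r : ℝ) ::ₘ Multiset.map lam Finset.univ.val) :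
    (joinK1 G).eccMatrix =
        Matrix.fromBlocks (2 • Gᶜ.adjMatrix ℝ) (Matrix.of fun _ _ => 1)
          (Matrix.of fun _ _ => 1) 0 ∧
      (joinK1 G).eccMatrix.charpoly.roots =
        (((n : ℝ) - r - 1) + Real.sqrt (((n : ℝ) - r - 1) ^ 2 + n)) ::ₘ
          (((n : ℝ) - r - 1) - Real.sqrt (((n : ℝ) - r - 1) ^ 2 + n)) ::ₘ
            Multiset.map (fun i => -2 * (lam i + 1)) Finset.univ.val := by
  have hblock := ecc_block G hreg hdiam.2
  refine ⟨hblock, ?_⟩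
  obtain ⟨a₀, b₀, hab₀⟩ := hdiam.2
  have : Nonempty V := ⟨a₀⟩
  have hn1 : 1 ≤ n := hn ▸ Fintype.card_pos
  set μ : ℝ := (n : ℝ) - r - 1 with hμ
  set s : ℝ := Real.sqrt (μ ^ 2 + n) with hs
  set R : Multiset ℝ := (r : ℝ) ::ₘ Multiset.map lam Finset.univ.val with hR
  set T : Multiset ℝ := (μ + s) ::ₘ (μ - s) ::ₘ
    Multiset.map (fun i => -2 * (lam i + 1)) Finset.univ.val with hT
  have hcardR : R.card = Fintype.card V := by
    rw [hR]
    simp only [Multiset.card_cons, Multiset.card_map]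
    have : (Finset.univ.val : Multiset (Fin (n-1))).card = n - 1 := by
      simp [Finset.card_univ]
    rw [this]
    omega
  have hfact : (G.adjMatrix ℝ).charpoly = (R.map fun a => X - C a).prod := by
    rw [← hspec]
    refine (Polynomial.prod_multiset_X_sub_C_of_monic_of_roots_card_eq (G.adjMatrix ℝ).charpoly_monic ?_).symm
    rw [hspec, Matrix.charpoly_natDegree_eq_dim]
    exact hcardR
  -- bad set
  set S : Set ℝ := insert 0 (insert (-2 - 2 * (r : ℝ)) (Set.range fun i => -2 - 2 * lam i))
    with hS
  have hSfin : S.Finite := by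
    apply Set.Finite.insert
    apply Set.Finite.insert
    exact Set.finite_range _
  set q : Polynomial ℝ := (T.map fun a => X - C a).prod with hq
  have hkey : ∀ x : ℝ, x ∉ S →
      eval x (joinK1 G).eccMatrix.charpoly = eval x q := by
    intro x hxS
    have hx0 : x ≠ 0 := fun h => hxS (by rw [h, hS]; exact Set.mem_insert _ _)
    have hxr : x + 2 + 2 * (r : ℝ) ≠ 0 := by
      intro h
      apply hxS
      rw [hS]
      right; left
      linarith
    have hxl : ∀ i, x + 2 + 2 * lam i ≠ 0 := by
      intro i h
      apply hxS
      rw [hS]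
      right; right
      refine ⟨i, ?_⟩
      show -2 - 2 * lam i = x
      linarith
    have hdetB : ((x + 2) • (1 : Matrix V V ℝ) + 2 • G.adjMatrix ℝ).det
        = (R.map fun t => x + 2 + 2 * t).prod := det_shift _ R hcardR hfact x
    have hdetBne : ((x + 2) • (1 : Matrix V V ℝ) + 2 • G.adjMatrix ℝ).det ≠ 0 := by
      rw [hdetB]
      apply Multiset.prod_ne_zero
      intro h0
      rw [Multiset.mem_map] at h0
      obtain ⟨t, ht, h0⟩ := h0
      rw [hR, Multiset.mem_cons] at ht
      rcases ht with rfl | ht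
      · exact hxr h0
      · rw [Multiset.mem_map] at ht
        obtain ⟨i, _, rfl⟩ := ht
        exact hxl i h0
    rw [eval_charpoly', hblock, det_block G hreg x hx0 hxr hdetBne, hdetB]
    -- compute the right side
    rw [hq, eval_prod_linear, hT, hR]
    simp only [Multiset.map_cons, Multiset.prod_cons, Multiset.map_map, Function.comp]
    have hmapeq : (Multiset.map (fun i => x - -2 * (lam i + 1)) Finset.univ.val)
        = Multiset.map (fun i => x + 2 + 2 * lam i) Finset.univ.val := by
      apply Multiset.map_congr rfl
      intro i _
      ring
    rw [hmapeq]
    set P : ℝ := (Multiset.map (fun i => x + 2 + 2 * lam i) Finset.univ.val).prod with hP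
    have hsq : s ^ 2 = μ ^ 2 + n := Real.sq_sqrt (by positivity)
    have hcast : ((Fintype.card V : ℝ)) = (n : ℝ) := by rw [hn]
    rw [hcast]
    have key2 : x * (x + 2 + 2 * (r : ℝ)) * (1 - (2 + x⁻¹) * (x + 2 + 2 * r)⁻¹ * (n : ℝ))
        = (x - (μ + s)) * (x - (μ - s)) := by
      have h2 : (x - (μ + s)) * (x - (μ - s)) = (x - μ) ^ 2 - s ^ 2 := by ring
      rw [h2, hsq, hμ]
      field_simp
      ring
    calc x * ((x + 2 + 2 * (r : ℝ)) * P) *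
          (1 - (2 + x⁻¹) * (x + 2 + 2 * (r : ℝ))⁻¹ * (n : ℝ))
        = (x * (x + 2 + 2 * (r : ℝ)) *
            (1 - (2 + x⁻¹) * (x + 2 + 2 * (r : ℝ))⁻¹ * (n : ℝ))) * P := by ring
      _ = ((x - (μ + s)) * (x - (μ - s))) * P := by rw [key2]
      _ = (x - (μ + s)) * ((x - (μ - s)) * P) := by ring
  have hpq : (joinK1 G).eccMatrix.charpoly = q := by
    apply Polynomial.eq_of_infinite_eval_eq
    exact hSfin.infinite_compl.mono (fun x hx => hkey x hx)
  rw [hpq, hq, Polynomial.roots_multiset_prod_X_sub_C, hT]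
end

section
/- Let L_{m,n} be the (m,n)-lollipop graph with n ≥ 2. Then the inertia of its eccentricity matrix is (2, 2, m+n−4): it has exactly two positive eigenvalues, two negative eigenvalues, and zero with multiplicity m+n−4. -/
open Matrix

open Polynomial

/-- The `(m,n)`-lollipop graph: the complete graph `K_m` joined to the path `P_n`
by a bridge. -/
def lollipop (m n : ℕ) : SimpleGraph (Fin m ⊕ Fin n) :=
  SimpleGraph.fromRel fun x y =>
    (∃ i j : Fin m, x = Sum.inl i ∧ y = Sum.inl j) ∨
    (∃ i j : Fin n, x = Sum.inr i ∧ y = Sum.inr j ∧ (j : ℕ) = (i : ℕ) + 1) ∨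
    (∃ (i : Fin m) (j : Fin n), x = Sum.inl i ∧ y = Sum.inr j ∧ (i : ℕ) = 0 ∧ (j : ℕ) = 0)

namespace LollipopProof

variable {m n : ℕ}

lemma adj_inl_inl {i j : Fin m} (h : i ≠ j) : (lollipop m n).Adj (.inl i) (.inl j) := by
  refine ⟨by simpa using h, Or.inl (Or.inl ⟨i, j, rfl, rfl⟩)⟩

lemma adj_inl_inr {i : Fin m} {j : Fin n} (hi : (i : ℕ) = 0) (hj : (j : ℕ) = 0) :
    (lollipop m n).Adj (.inl i) (.inr j) := by
  refine ⟨by simp, Or.inl (Or.inr (Or.inr ⟨i, j, rfl, rfl, hi, hj⟩))⟩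

lemma adj_inr_inr {i j : Fin n} (h : (j : ℕ) = (i : ℕ) + 1) :
    (lollipop m n).Adj (.inr i) (.inr j) := by
  refine ⟨by simp [Fin.ext_iff]; omega, Or.inl (Or.inr (Or.inl ⟨i, j, rfl, rfl, h⟩))⟩

/-- The potential function used for distance lower bounds. -/
def pot : Fin m ⊕ Fin n → ℤ :=
  Sum.elim (fun i => if (i : ℕ) = 0 then -1 else -2) (fun j => (j : ℤ))

lemma pot_adj {x y : Fin m ⊕ Fin n} (h : (lollipop m n).Adj x y) :
    |pot x - pot y| ≤ 1 := by
  obtain ⟨hne, h | h⟩ := h <;>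
  · rcases h with ⟨i, j, rfl, rfl⟩ | ⟨i, j, rfl, rfl, hij⟩ | ⟨i, j, rfl, rfl, hi, hj⟩ <;>
      simp only [pot, Sum.elim_inl, Sum.elim_inr] <;>
      [skip; (rw [abs_le]; omega); skip]
    · split <;> split <;> simp
    · simp [hi, hj]

lemma pot_walk {x y : Fin m ⊕ Fin n} (p : (lollipop m n).Walk x y) :
    |pot x - pot y| ≤ (p.length : ℤ) := by
  induction p with
  | nil => simp
  | @cons u v w h p ih =>
      refine le_trans (abs_sub_le _ (pot v) _) ?_
      simp only [SimpleGraph.Walk.length_cons]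
      push_cast
      have := pot_adj h
      omega

lemma dist_eq_of_walk {x y : Fin m ⊕ Fin n} {L : ℕ} (p : (lollipop m n).Walk x y)
    (hup : p.length = L) (hlo : |pot x - pot y| = (L : ℤ)) :
    (lollipop m n).dist x y = L := by
  refine le_antisymm (hup ▸ SimpleGraph.dist_le p) ?_
  obtain ⟨q, hq⟩ := SimpleGraph.Reachable.exists_walk_length_eq_dist ⟨p⟩
  have := pot_walk q
  rw [hq, hlo] at this
  exact_mod_cast this

lemma walk_path (m : ℕ) : ∀ (d : ℕ) (i j : Fin n), (j : ℕ) = (i : ℕ) + d →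
    ∃ p : (lollipop m n).Walk (.inr i) (.inr j), p.length = d := by
  intro d
  induction d with
  | zero =>
      intro i j h
      have : i = j := Fin.ext (by omega)
      subst this
      exact ⟨SimpleGraph.Walk.nil, rfl⟩
  | succ d ih =>
      intro i j h
      have hi1 : (i : ℕ) + 1 < n := by have := j.isLt; omega
      obtain ⟨p, hp⟩ := ih ⟨(i : ℕ) + 1, hi1⟩ j (by simpa using by omega)
      exact ⟨SimpleGraph.Walk.cons (adj_inr_inr (by simp)) p, by simp [hp]⟩

lemma dist_inl_inl {i j : Fin m} (h : i ≠ j) :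
    (lollipop m n).dist (.inl i) (.inl j) = 1 :=
  SimpleGraph.dist_eq_one_iff_adj.mpr (adj_inl_inl h)

lemma dist_inr_inr_le {i j : Fin n} (h : (i : ℕ) ≤ (j : ℕ)) :
    (lollipop m n).dist (.inr i) (.inr j) = (j : ℕ) - (i : ℕ) := by
  obtain ⟨p, hp⟩ := walk_path m ((j : ℕ) - (i : ℕ)) i j (by omega)
  refine dist_eq_of_walk p hp ?_
  simp only [pot, Sum.elim_inr]
  rw [abs_sub_comm, abs_of_nonneg (by omega : (0:ℤ) ≤ (j:ℤ) - i)]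
  omega

lemma dist_inr_inr (i j : Fin n) :
    (lollipop m n).dist (.inr i) (.inr j) = max (i : ℕ) (j : ℕ) - min (i : ℕ) (j : ℕ) := by
  rcases le_total (i : ℕ) (j : ℕ) with h | h
  · rw [dist_inr_inr_le h]; omega
  · rw [SimpleGraph.dist_comm, dist_inr_inr_le h]; omega

lemma dist_inl_inr (hm : 3 ≤ m) (hn : 2 ≤ n) (i : Fin m) (j : Fin n) :
    (lollipop m n).dist (.inl i) (.inr j) =
      if (i : ℕ) = 0 then (j : ℕ) + 1 else (j : ℕ) + 2 := by
  have h0m : (0 : ℕ) < m := by omega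
  have h0n : (0 : ℕ) < n := by omega
  obtain ⟨p, hp⟩ := walk_path m (j : ℕ) (⟨0, h0n⟩ : Fin n) j (by simp)
  have bridge : (lollipop m n).Adj (.inl ⟨0, h0m⟩) (.inr ⟨0, h0n⟩) := adj_inl_inr rfl rfl
  by_cases hi : (i : ℕ) = 0
  · have : i = ⟨0, h0m⟩ := Fin.ext hi
    subst this
    rw [if_pos hi]
    refine dist_eq_of_walk (SimpleGraph.Walk.cons bridge p) (by simp [hp]) ?_
    simp only [pot, Sum.elim_inl, Sum.elim_inr, if_pos hi]
    rw [abs_of_nonpos (by omega)]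
    push_cast
    omega
  · rw [if_neg hi]
    have hne : i ≠ ⟨0, h0m⟩ := by simp [Fin.ext_iff, hi]
    refine dist_eq_of_walk
      (SimpleGraph.Walk.cons (adj_inl_inl hne) (SimpleGraph.Walk.cons bridge p))
      (by simp [hp]) ?_
    simp only [pot, Sum.elim_inl, Sum.elim_inr, if_neg hi]
    rw [abs_of_nonpos (by omega)]
    push_cast
    omega

end LollipopProof


namespace LollipopProof
variable {m n : ℕ}

lemma ecc_inl (hm : 3 ≤ m) (hn : 2 ≤ n) (i : Fin m) :
    (lollipop m n).ecc (.inl i) = if (i : ℕ) = 0 then n else n + 1 := by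
  have h0n : (0 : ℕ) < n := by omega
  have hw : ((⟨n-1, by omega⟩ : Fin n) : ℕ) = n - 1 := rfl
  refine le_antisymm (Finset.sup_le fun v _ => ?_) ?_
  · rcases v with j | j
    · by_cases hij : i = j
      · subst hij; rw [SimpleGraph.dist_self]; exact Nat.zero_le _
      · rw [dist_inl_inl hij]; split <;> omega
    · rw [dist_inl_inr hm hn i j]
      have := j.isLt
      split <;> omega
  · refine le_trans ?_ (Finset.le_sup (Finset.mem_univ (Sum.inr (⟨n-1, by omega⟩ : Fin n))))
    rw [dist_inl_inr hm hn]
    rw [hw]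
    split <;> omega

lemma ecc_inr (hm : 3 ≤ m) (hn : 2 ≤ n) (j : Fin n) :
    (lollipop m n).ecc (.inr j) = max ((j : ℕ) + 2) (n - 1 - (j : ℕ)) := by
  have hj := j.isLt
  refine le_antisymm (Finset.sup_le fun v _ => ?_) ?_
  · rcases v with k | k
    · rw [SimpleGraph.dist_comm, dist_inl_inr hm hn k j]
      split <;> omega
    · rw [dist_inr_inr]
      have := k.isLt
      omega
  · refine max_le ?_ ?_
    · refine le_trans ?_ (Finset.le_sup (Finset.mem_univ (Sum.inl (⟨1, by omega⟩ : Fin m))))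
      rw [SimpleGraph.dist_comm, dist_inl_inr hm hn]
      norm_num
    · refine le_trans ?_ (Finset.le_sup (Finset.mem_univ (Sum.inr (⟨n-1, by omega⟩ : Fin n))))
      rw [dist_inr_inr]
      have : ((⟨n-1, by omega⟩ : Fin n) : ℕ) = n - 1 := rfl
      rw [this]
      omega

end LollipopProof


namespace LollipopProof
variable {m n : ℕ}

/-- Indicator of non-hub clique vertices. -/
def uu (m n : ℕ) : Fin m ⊕ Fin n → ℝ :=
  Sum.elim (fun i => if (i : ℕ) = 0 then 0 else 1) 0

def ww (m n : ℕ) : Fin m ⊕ Fin n → ℝ :=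
  Sum.elim 0 (fun j => if n ≤ 2 * (j : ℕ) + 3 then ((j : ℕ) + 2 : ℝ) else 0)

def aa (m n : ℕ) : Fin m ⊕ Fin n → ℝ :=
  Sum.elim (fun i => if (i : ℕ) = 0 then (n : ℝ) else 0)
    (fun j => if 2 * (j : ℕ) + 3 ≤ n then ((n : ℝ) - 1 - (j : ℕ)) else 0)

def zz (m n : ℕ) : Fin m ⊕ Fin n → ℝ :=
  Sum.elim 0 (fun j => if (j : ℕ) = n - 1 then 1 else 0)

lemma eccMatrix_symm {V : Type*} [Fintype V] (G : SimpleGraph V) (x y : V) :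
    G.eccMatrix x y = G.eccMatrix y x := by
  unfold SimpleGraph.eccMatrix
  simp only [Matrix.of_apply]
  rw [SimpleGraph.dist_comm, min_comm]

lemma entry_rhs_symm (x y : Fin m ⊕ Fin n) :
    uu m n x * ww m n y + ww m n x * uu m n y + aa m n x * zz m n y + zz m n x * aa m n y =
    uu m n y * ww m n x + ww m n y * uu m n x + aa m n y * zz m n x + zz m n y * aa m n x := by
  ring

lemma entry (hm : 3 ≤ m) (hn : 2 ≤ n) (x y : Fin m ⊕ Fin n) :
    (lollipop m n).eccMatrix x y =
      uu m n x * ww m n y + ww m n x * uu m n y + aa m n x * zz m n y + zz m n x * aa m n y := by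
  have key : ∀ (i : Fin m) (j : Fin n), (lollipop m n).eccMatrix (.inl i) (.inr j) =
      uu m n (.inl i) * ww m n (.inr j) + ww m n (.inl i) * uu m n (.inr j) +
      aa m n (.inl i) * zz m n (.inr j) + zz m n (.inl i) * aa m n (.inr j) := by
    intro i j
    have hj := j.isLt
    unfold SimpleGraph.eccMatrix
    simp only [Matrix.of_apply]
    rw [dist_inl_inr hm hn, ecc_inl hm hn, ecc_inr hm hn]
    simp only [uu, ww, aa, zz, Sum.elim_inl, Sum.elim_inr, Pi.zero_apply]
    by_cases hi : (i : ℕ) = 0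
    · simp only [if_pos hi]
      by_cases hjn : (j : ℕ) = n - 1
      · have hc : (j : ℕ) + 1 = min n (max ((j : ℕ) + 2) (n - 1 - (j : ℕ))) := by omega
        rw [if_pos hc, if_pos hjn]
        have : (j : ℕ) + 1 = n := by omega
        push_cast [this]
        ring
      · have hc : ¬((j : ℕ) + 1 = min n (max ((j : ℕ) + 2) (n - 1 - (j : ℕ)))) := by omega
        rw [if_neg hc, if_neg hjn]
        ring
    · simp only [if_neg hi]
      by_cases hc : n ≤ 2 * (j : ℕ) + 3
      · have hc2 : (j : ℕ) + 2 = min (n + 1) (max ((j : ℕ) + 2) (n - 1 - (j : ℕ))) := by omega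
        rw [if_pos hc2, if_pos hc]
        push_cast
        ring
      · have hc2 : ¬((j : ℕ) + 2 = min (n + 1) (max ((j : ℕ) + 2) (n - 1 - (j : ℕ)))) := by
          omega
        rw [if_neg hc2, if_neg hc]
        ring
  rcases x with i | i <;> rcases y with j | j
  · -- inl inl
    unfold SimpleGraph.eccMatrix
    simp only [Matrix.of_apply]
    rw [ecc_inl hm hn, ecc_inl hm hn]
    have hd : (lollipop m n).dist (.inl i) (.inl j) ≤ 1 := by
      by_cases hij : i = j
      · subst hij; rw [SimpleGraph.dist_self]; omega
      · rw [dist_inl_inl hij]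
    rw [if_neg (by split <;> split <;> omega)]
    simp [uu, ww, aa, zz]
  · exact key i j
  · rw [eccMatrix_symm, key j i, entry_rhs_symm]
  · -- inr inr
    have hi := i.isLt
    have hj := j.isLt
    unfold SimpleGraph.eccMatrix
    simp only [Matrix.of_apply]
    rw [dist_inr_inr, ecc_inr hm hn, ecc_inr hm hn]
    simp only [uu, ww, aa, zz, Sum.elim_inl, Sum.elim_inr, Pi.zero_apply]
    set C : Prop := max (i : ℕ) (j : ℕ) - min (i : ℕ) (j : ℕ) =
      min (max ((i : ℕ) + 2) (n - 1 - (i : ℕ))) (max ((j : ℕ) + 2) (n - 1 - (j : ℕ))) with hC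
    by_cases h1 : (j : ℕ) = n - 1 ∧ 2 * (i : ℕ) + 3 ≤ n
    · rw [if_pos (show C by rw [hC]; omega), if_pos h1.2, if_pos h1.1,
        if_neg (show ¬((i : ℕ) = n - 1) by omega),
        if_neg (show ¬(2 * (j : ℕ) + 3 ≤ n) by omega)]
      have hval : max (i : ℕ) (j : ℕ) - min (i : ℕ) (j : ℕ) = n - 1 - (i : ℕ) := by omega
      rw [hval, Nat.cast_sub (by omega), Nat.cast_sub (by omega)]
      push_cast
      ring
    · by_cases h2 : (i : ℕ) = n - 1 ∧ 2 * (j : ℕ) + 3 ≤ n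
      · rw [if_pos (show C by rw [hC]; omega), if_pos h2.2, if_pos h2.1,
          if_neg (show ¬(2 * (i : ℕ) + 3 ≤ n) by omega),
          if_neg (show ¬((j : ℕ) = n - 1) by omega)]
        have hval : max (i : ℕ) (j : ℕ) - min (i : ℕ) (j : ℕ) = n - 1 - (j : ℕ) := by omega
        rw [hval, Nat.cast_sub (by omega), Nat.cast_sub (by omega)]
        push_cast
        ring
      · rw [if_neg (show ¬C by rw [hC]; omega)]
        split_ifs <;> (try ring)
        all_goals exfalso; omega

end LollipopProof


namespace LollipopProof
variable {m n : ℕ}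

def Xmat (m n : ℕ) : Matrix (Fin m ⊕ Fin n) (Fin 4) ℝ :=
  Matrix.of fun v k => ![uu m n v, ww m n v, aa m n v, zz m n v] k

def Kmat : Matrix (Fin 4) (Fin 4) ℝ := !![0,1,0,0; 1,0,0,0; 0,0,0,1; 0,0,1,0]

def Bmat (m n : ℕ) : Matrix (Fin 4) (Fin 4) ℝ := Kmat * (Xmat m n)ᵀ * Xmat m n

lemma E_decomp (hm : 3 ≤ m) (hn : 2 ≤ n) :
    (lollipop m n).eccMatrix = Xmat m n * Kmat * (Xmat m n)ᵀ := by
  ext x y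
  rw [entry hm hn x y]
  simp [Matrix.mul_apply, Fin.sum_univ_four, Xmat, Kmat, Matrix.transpose_apply]
  ring

lemma eval_charpoly' {k : Type*} [Fintype k] [DecidableEq k] (M : Matrix k k ℝ) (x : ℝ) :
    M.charpoly.eval x = Matrix.det (x • (1 : Matrix k k ℝ) - M) := by
  have h1 : M.charpoly.eval x = (Polynomial.evalRingHom x) M.charpoly := rfl
  rw [h1, Matrix.charpoly, RingHom.map_det]
  congr 1
  ext i j
  by_cases h : i = j
  · subst h
    simp [Matrix.charmatrix_apply_eq, Matrix.map_apply, Matrix.smul_apply, Matrix.one_apply_eq]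
  · simp [Matrix.charmatrix_apply_ne _ _ _ h, Matrix.map_apply, Matrix.smul_apply,
      Matrix.one_apply_ne h]

lemma det_Kmat : Kmat.det = 1 := by
  simp [Kmat, Matrix.det_succ_row_zero, Fin.sum_univ_succ, Fin.succAbove]

lemma charpoly_factor (hm : 3 ≤ m) (hn : 2 ≤ n) :
    (lollipop m n).eccMatrix.charpoly =
      Polynomial.X ^ (m + n - 4) * (Bmat m n).charpoly := by
  apply Polynomial.eq_of_infinite_eval_eq
  refine Set.Infinite.mono ?_ ((Set.finite_singleton (0 : ℝ)).infinite_compl)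
  intro x hx
  have hx : x ≠ 0 := hx
  simp only [Set.mem_setOf_eq]
  rw [eval_charpoly', E_decomp hm hn]
  have h1 : x • ((1 : Matrix (Fin m ⊕ Fin n) (Fin m ⊕ Fin n) ℝ)
      - Xmat m n * (x⁻¹ • (Kmat * (Xmat m n)ᵀ)))
      = x • 1 - Xmat m n * Kmat * (Xmat m n)ᵀ := by
    rw [smul_sub, Matrix.mul_smul, smul_smul, mul_inv_cancel₀ hx, one_smul, Matrix.mul_assoc]
  rw [← h1, Matrix.det_smul, Matrix.det_one_sub_mul_comm, Matrix.smul_mul]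
  have h2 : (1 : Matrix (Fin 4) (Fin 4) ℝ) - x⁻¹ • (Kmat * ((Xmat m n)ᵀ * Xmat m n))
      = x⁻¹ • (x • 1 - Bmat m n) := by
    rw [smul_sub, smul_smul, inv_mul_cancel₀ hx, one_smul, Bmat, Matrix.mul_assoc]
  rw [Matrix.mul_assoc Kmat, h2, Matrix.det_smul]
  rw [Polynomial.eval_mul, Polynomial.eval_pow, Polynomial.eval_X, eval_charpoly']
  have hcard : Fintype.card (Fin m ⊕ Fin n) = m + n := by simp
  rw [hcard, Fintype.card_fin]
  rw [show x ^ (m + n - 4) = x ^ (m + n) * (x ^ 4)⁻¹ from pow_sub₀ x hx (by omega), ← inv_pow]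
  ring

lemma isHerm : ((lollipop m n).eccMatrix).IsHermitian := by
  ext x y
  simp only [Matrix.conjTranspose_apply, star_trivial]
  exact eccMatrix_symm _ y x

lemma charpoly_roots_card :
    Multiset.card ((lollipop m n).eccMatrix.charpoly.roots) = m + n := by
  classical
  set A := (lollipop m n).eccMatrix with hA_def
  have hA : A.IsHermitian := isHerm
  set U : Matrix (Fin m ⊕ Fin n) (Fin m ⊕ Fin n) ℝ :=
    ((Matrix.IsHermitian.eigenvectorUnitary hA :
      Matrix.unitaryGroup (Fin m ⊕ Fin n) ℝ) : Matrix (Fin m ⊕ Fin n) (Fin m ⊕ Fin n) ℝ)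
    with hU_def
  have hUU : U * star U = 1 :=
    (Matrix.mem_unitaryGroup_iff).mp (Matrix.IsHermitian.eigenvectorUnitary hA).2
  have hcp : A.charpoly = ∏ i : Fin m ⊕ Fin n, (Polynomial.X - Polynomial.C (hA.eigenvalues i)) := by
    apply Polynomial.funext
    intro x
    rw [eval_charpoly']
    have hspec := hA.spectral_theorem
    set D : Matrix (Fin m ⊕ Fin n) (Fin m ⊕ Fin n) ℝ :=
      Matrix.diagonal (RCLike.ofReal ∘ hA.eigenvalues) with hD_def
    have key : x • (1 : Matrix (Fin m ⊕ Fin n) (Fin m ⊕ Fin n) ℝ) - A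
        = U * (x • 1 - D) * star U := by
      conv_lhs => rw [hspec]
      rw [Matrix.mul_sub, Matrix.sub_mul]
      congr 1
      rw [Matrix.mul_smul, Matrix.mul_one, Matrix.smul_mul, hUU]
    rw [key, Matrix.det_mul, Matrix.det_mul]
    have : U.det * (x • (1:Matrix (Fin m ⊕ Fin n) (Fin m ⊕ Fin n) ℝ) - D).det * (star U).det
        = (x • (1:Matrix (Fin m ⊕ Fin n) (Fin m ⊕ Fin n) ℝ) - D).det * (U * star U).det := by
      rw [Matrix.det_mul]; ring
    rw [this, hUU, Matrix.det_one, mul_one]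
    have hdiag : x • (1 : Matrix (Fin m ⊕ Fin n) (Fin m ⊕ Fin n) ℝ) - D
        = Matrix.diagonal (fun i => x - hA.eigenvalues i) := by
      ext i j
      by_cases h : i = j
      · subst h
        simp [hD_def, Matrix.diagonal_apply_eq, Matrix.one_apply_eq]
      · simp [hD_def, Matrix.diagonal_apply_ne _ h, Matrix.one_apply_ne h]
    rw [hdiag, Matrix.det_diagonal]
    simp [Polynomial.eval_prod]
  rw [hcp]
  rw [Finset.prod_eq_multiset_prod]
  have : (Finset.univ.val.map fun i => Polynomial.X - Polynomial.C (hA.eigenvalues i))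
      = (Finset.univ.val.map hA.eigenvalues).map fun a => Polynomial.X - Polynomial.C a := by
    rw [Multiset.map_map]; rfl
  rw [this, Polynomial.roots_multiset_prod_X_sub_C, Multiset.card_map]
  simp [Finset.card_univ]

end LollipopProof


namespace LollipopProof
variable {m n : ℕ}

lemma pointwise_uw (v : Fin m ⊕ Fin n) : uu m n v * ww m n v = 0 := by
  rcases v with i | j <;> simp [uu, ww]

lemma pointwise_az (hn : 2 ≤ n) (v : Fin m ⊕ Fin n) : aa m n v * zz m n v = 0 := by
  rcases v with i | j
  · simp [aa, zz]
  · simp only [aa, zz, Sum.elim_inr]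
    have hj := j.isLt
    by_cases h2 : (j : ℕ) = n - 1
    · rw [if_neg (show ¬(2 * (j : ℕ) + 3 ≤ n) by omega), zero_mul]
    · rw [if_neg h2, mul_zero]

lemma trace_B (hn : 2 ≤ n) : (Bmat m n).trace = 0 := by
  rw [Bmat, Matrix.trace_mul_comm]
  rw [Matrix.trace]
  refine Finset.sum_eq_zero fun v _ => ?_
  have h1 := pointwise_uw (m := m) (n := n) v
  have h2 := pointwise_az (m := m) hn v
  simp [Matrix.mul_apply, Fin.sum_univ_four, Xmat, Kmat, Matrix.vecHead, Matrix.vecTail,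
    Matrix.vecMul, dotProduct]
  linear_combination 2 * h1 + 2 * h2

lemma X_mulVec_ne (hm : 3 ≤ m) (hn : 2 ≤ n) {c : Fin 4 → ℝ} (hc : c ≠ 0) :
    Xmat m n *ᵥ c ≠ 0 := by
  intro h
  apply hc
  have h0 := congrFun h (Sum.inl ⟨1, by omega⟩)
  have h1 := congrFun h (Sum.inl ⟨0, by omega⟩)
  have h2 := congrFun h (Sum.inr ⟨n - 2, by omega⟩)
  have h3 := congrFun h (Sum.inr ⟨n - 1, by omega⟩)
  simp [Matrix.mulVec, dotProduct, Fin.sum_univ_four, Xmat, Matrix.vecHead,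
    Matrix.vecTail, uu, ww, aa, zz] at h0 h1 h2 h3
  have hc2 : c 2 = 0 := h1.resolve_left (by omega)
  rw [if_pos (show n ≤ 2 * (n - 2) + 3 by omega), if_neg (show ¬(2 * (n - 2) + 3 ≤ n) by omega),
    if_neg (show ¬(n - 2 = n - 1) by omega)] at h2
  have hc1 : c 1 = 0 := by
    have hpos : (0 : ℝ) < ((n - 2 : ℕ) : ℝ) + 2 := by positivity
    rcases mul_eq_zero.mp (by linarith [h2] : (((n - 2 : ℕ) : ℝ) + 2) * c 1 = 0) with h | h
    · exact absurd h (ne_of_gt hpos)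
    · exact h
  rw [if_pos (show n ≤ 2 * (n - 1) + 3 by omega), hc1, hc2] at h3
  simp at h3
  funext k
  fin_cases k <;> simpa using by first | exact h0 | exact hc1 | exact hc2 | exact h3

lemma posDef_G (hm : 3 ≤ m) (hn : 2 ≤ n) : ((Xmat m n)ᵀ * Xmat m n).PosDef := by
  refine Matrix.PosDef.of_dotProduct_mulVec_pos ?_ ?_
  · ext i j
    simp only [Matrix.conjTranspose_apply, star_trivial, Matrix.mul_apply,
      Matrix.transpose_apply]
    exact Finset.sum_congr rfl fun v _ => mul_comm _ _
  · intro x hx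
    have key : dotProduct (star x) (((Xmat m n)ᵀ * Xmat m n) *ᵥ x)
        = dotProduct (Xmat m n *ᵥ x) (Xmat m n *ᵥ x) := by
      rw [← Matrix.mulVec_mulVec, dotProduct_mulVec, Matrix.vecMul_transpose]
      simp only [star_trivial]
    rw [key]
    have hy : Xmat m n *ᵥ x ≠ 0 := X_mulVec_ne hm hn hx
    have h1 : 0 ≤ dotProduct (Xmat m n *ᵥ x) (Xmat m n *ᵥ x) :=
      Finset.sum_nonneg fun v _ => mul_self_nonneg _
    rcases h1.eq_or_lt with h | h
    · exact absurd (dotProduct_self_eq_zero.mp h.symm) hy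
    · exact h

lemma det_B_pos (hm : 3 ≤ m) (hn : 2 ≤ n) : 0 < (Bmat m n).det := by
  have h : (Bmat m n).det = Kmat.det * ((Xmat m n)ᵀ * Xmat m n).det := by
    rw [Bmat, Matrix.mul_assoc, Matrix.det_mul]
  rw [h, det_Kmat, one_mul]
  exact (posDef_G hm hn).det_pos

end LollipopProof


namespace LollipopProof
variable {m n : ℕ}

lemma count_four (s : Multiset ℝ) (h4 : Multiset.card s = 4) (h0 : s.sum = 0)
    (hp : 0 < s.prod) :
    Multiset.card (s.filter fun x => 0 < x) = 2 ∧
    Multiset.card (s.filter fun x => x < 0) = 2 ∧ Multiset.count (0 : ℝ) s = 0 := by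
  obtain ⟨a, ha⟩ := Multiset.card_pos_iff_exists_mem.mp (by rw [h4]; norm_num)
  obtain ⟨t, rfl⟩ := Multiset.exists_cons_of_mem ha
  rw [Multiset.card_cons] at h4
  obtain ⟨b, c, d, rfl⟩ := (Multiset.card_eq_three (s := t)).mp (by omega)
  clear ha h4
  simp only [Multiset.insert_eq_cons, Multiset.sum_cons, Multiset.sum_singleton] at h0
  simp only [Multiset.insert_eq_cons, Multiset.prod_cons, Multiset.prod_singleton] at hp
  have ha0 : a ≠ 0 := by intro h; simp [h] at hp
  have hb0 : b ≠ 0 := by intro h; simp [h] at hp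
  have hc0 : c ≠ 0 := by intro h; simp [h] at hp
  have hd0 : d ≠ 0 := by intro h; simp [h] at hp
  rcases lt_or_gt_of_ne ha0 with ha | ha <;> rcases lt_or_gt_of_ne hb0 with hb | hb <;>
    rcases lt_or_gt_of_ne hc0 with hc | hc <;> rcases lt_or_gt_of_ne hd0 with hd | hd
  · exfalso; linarith
  · have p1 := mul_neg_of_neg_of_pos hc hd
    have p2 := mul_pos_of_neg_of_neg hb p1
    have p3 := mul_neg_of_neg_of_pos ha p2
    exfalso; linarith
  · have p1 := mul_neg_of_pos_of_neg hc hd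
    have p2 := mul_pos_of_neg_of_neg hb p1
    have p3 := mul_neg_of_neg_of_pos ha p2
    exfalso; linarith
  · refine ⟨?_, ?_, ?_⟩ <;>
      simp [Multiset.filter_cons, Multiset.count_cons, Multiset.filter_singleton, Multiset.count_singleton, ha, hb, hc, hd,
        ha.not_gt, hb.not_gt, hc.not_gt, hd.not_gt,
        ha.ne, hb.ne, hc.ne, hd.ne, ha.ne', hb.ne', hc.ne', hd.ne']
  · have p1 := mul_pos_of_neg_of_neg hc hd
    have p2 := mul_pos hb p1
    have p3 := mul_neg_of_neg_of_pos ha p2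
    exfalso; linarith
  · refine ⟨?_, ?_, ?_⟩ <;>
      simp [Multiset.filter_cons, Multiset.count_cons, Multiset.filter_singleton, Multiset.count_singleton, ha, hb, hc, hd,
        ha.not_gt, hb.not_gt, hc.not_gt, hd.not_gt,
        ha.ne, hb.ne, hc.ne, hd.ne, ha.ne', hb.ne', hc.ne', hd.ne']
  · refine ⟨?_, ?_, ?_⟩ <;>
      simp [Multiset.filter_cons, Multiset.count_cons, Multiset.filter_singleton, Multiset.count_singleton, ha, hb, hc, hd,
        ha.not_gt, hb.not_gt, hc.not_gt, hd.not_gt,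
        ha.ne, hb.ne, hc.ne, hd.ne, ha.ne', hb.ne', hc.ne', hd.ne']
  · have p1 := mul_pos hc hd
    have p2 := mul_pos hb p1
    have p3 := mul_neg_of_neg_of_pos ha p2
    exfalso; linarith
  · have p1 := mul_pos_of_neg_of_neg hc hd
    have p2 := mul_neg_of_neg_of_pos hb p1
    have p3 := mul_neg_of_pos_of_neg ha p2
    exfalso; linarith
  · refine ⟨?_, ?_, ?_⟩ <;>
      simp [Multiset.filter_cons, Multiset.count_cons, Multiset.filter_singleton, Multiset.count_singleton, ha, hb, hc, hd,
        ha.not_gt, hb.not_gt, hc.not_gt, hd.not_gt,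
        ha.ne, hb.ne, hc.ne, hd.ne, ha.ne', hb.ne', hc.ne', hd.ne']
  · refine ⟨?_, ?_, ?_⟩ <;>
      simp [Multiset.filter_cons, Multiset.count_cons, Multiset.filter_singleton, Multiset.count_singleton, ha, hb, hc, hd,
        ha.not_gt, hb.not_gt, hc.not_gt, hd.not_gt,
        ha.ne, hb.ne, hc.ne, hd.ne, ha.ne', hb.ne', hc.ne', hd.ne']
  · have p1 := mul_pos hc hd
    have p2 := mul_neg_of_neg_of_pos hb p1
    have p3 := mul_neg_of_pos_of_neg ha p2
    exfalso; linarith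
  · refine ⟨?_, ?_, ?_⟩ <;>
      simp [Multiset.filter_cons, Multiset.count_cons, Multiset.filter_singleton, Multiset.count_singleton, ha, hb, hc, hd,
        ha.not_gt, hb.not_gt, hc.not_gt, hd.not_gt,
        ha.ne, hb.ne, hc.ne, hd.ne, ha.ne', hb.ne', hc.ne', hd.ne']
  · have p1 := mul_neg_of_neg_of_pos hc hd
    have p2 := mul_neg_of_pos_of_neg hb p1
    have p3 := mul_neg_of_pos_of_neg ha p2
    exfalso; linarith
  · have p1 := mul_neg_of_pos_of_neg hc hd
    have p2 := mul_neg_of_pos_of_neg hb p1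
    have p3 := mul_neg_of_pos_of_neg ha p2
    exfalso; linarith
  · exfalso; linarith

end LollipopProof

/-- The inertia of the eccentricity matrix of the lollipop graph `L_{m,n}` (`n ≥ 2`) is
`(2, 2, m + n - 4)`: two positive eigenvalues, two negative eigenvalues, and `0` with
multiplicity `m + n - 4`. -/
theorem eccMatrix_lollipop_inertia (m n : ℕ) (hm : 3 ≤ m) (hn : 2 ≤ n) :
    Multiset.card ((lollipop m n).eccMatrix.charpoly.roots.filter fun x => 0 < x) = 2 ∧
    Multiset.card ((lollipop m n).eccMatrix.charpoly.roots.filter fun x => x < 0) = 2 ∧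
    Multiset.count (0 : ℝ) (lollipop m n).eccMatrix.charpoly.roots = m + n - 4 := by
  classical
  have hfac := LollipopProof.charpoly_factor hm hn
  set q := (LollipopProof.Bmat m n).charpoly with hq
  have hEm : (lollipop m n).eccMatrix.charpoly ≠ 0 := (Matrix.charpoly_monic _).ne_zero
  have hmulne : (Polynomial.X ^ (m + n - 4) * q) ≠ 0 := hfac ▸ hEm
  have hroots : (lollipop m n).eccMatrix.charpoly.roots
      = Multiset.replicate (m + n - 4) 0 + q.roots := by
    rw [hfac, Polynomial.roots_mul hmulne, Polynomial.roots_pow, Polynomial.roots_X]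
    congr 1
    exact Multiset.nsmul_singleton _ _
  have hcard := LollipopProof.charpoly_roots_card (m := m) (n := n)
  have hqcard : Multiset.card q.roots = 4 := by
    rw [hroots, Multiset.card_add, Multiset.card_replicate] at hcard
    omega
  have hdeg : q.natDegree = 4 := by
    rw [hq, Matrix.charpoly_natDegree_eq_dim, Fintype.card_fin]
  have hsplits : q.Splits :=
    (Polynomial.splits_iff_card_roots).mpr (by rw [hqcard, hdeg])
  have hsum : q.roots.sum = 0 := by
    rw [← Matrix.trace_eq_sum_roots_charpoly_of_splits hsplits]
    exact LollipopProof.trace_B hn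
  have hprod : 0 < q.roots.prod := by
    rw [← Matrix.det_eq_prod_roots_charpoly_of_splits hsplits]
    exact LollipopProof.det_B_pos hm hn
  obtain ⟨hpos, hneg, hzero⟩ := LollipopProof.count_four q.roots hqcard hsum hprod
  have hfilt_rep_pos : Multiset.filter (fun x => 0 < x) (Multiset.replicate (m + n - 4) (0:ℝ))
      = 0 := by
    rw [Multiset.filter_eq_nil]
    intro a ha
    rw [Multiset.eq_of_mem_replicate ha]
    exact lt_irrefl 0
  have hfilt_rep_neg : Multiset.filter (fun x => x < 0) (Multiset.replicate (m + n - 4) (0:ℝ))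
      = 0 := by
    rw [Multiset.filter_eq_nil]
    intro a ha
    rw [Multiset.eq_of_mem_replicate ha]
    exact lt_irrefl 0
  refine ⟨?_, ?_, ?_⟩
  · rw [hroots, Multiset.filter_add, Multiset.card_add, hfilt_rep_pos, hpos]; rfl
  · rw [hroots, Multiset.filter_add, Multiset.card_add, hfilt_rep_neg, hneg]; rfl
  · rw [hroots, Multiset.count_add, hzero, Multiset.count_replicate_self]; omega
end
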